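/- arXiv:2404.04246 — 2 statements merged into one kernel-verified Lean document; each statement's English description precedes it below -/
import Mathlib

section
/- Let (W,S) be a Coxeter system, J ⊆ S, and u, v ∈ W^J with u ≤ v. Define A^J_{u,v} = {a ∈ W^J : u ⋖ a ≤ v} (atoms of [u,v] lying in W^J). Then uW_J ∩ [e,v] = {y ∈ [u,v] : for all a ∈ A^J_{u,v}, ¬(a ≤ y)}. -/
open Polynomial

namespace KL

variable {B W : Type*} [Group W] {M : CoxeterMatrix B}

/-- Bruhat order on a Coxeter group: reflexive-transitive closure of right
multiplication by a reflection that increases length. -/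
def BruhatLE (cs : CoxeterSystem M W) : W → W → Prop :=
  Relation.ReflTransGen (fun x y =>
    ∃ t, cs.IsReflection t ∧ y = x * t ∧ cs.length x < cs.length y)

def BruhatLT (cs : CoxeterSystem M W) (x y : W) : Prop :=
  BruhatLE cs x y ∧ x ≠ y

/-- Covering relation of Bruhat order. -/
def BruhatCovBy (cs : CoxeterSystem M W) (x y : W) : Prop :=
  BruhatLT cs x y ∧ ∀ z, BruhatLT cs x z → BruhatLT cs z y → False

/-- The Bruhat interval `[u, v]`. -/
def BruhatInterval (cs : CoxeterSystem M W) (u v : W) : Set W :=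
  {y | BruhatLE cs u y ∧ BruhatLE cs y v}

/-- The standard parabolic subgroup `W_J`. -/
def ParabolicSubgroup (cs : CoxeterSystem M W) (J : Set B) : Subgroup W :=
  Subgroup.closure (cs.simple '' J)

/-- `w` is the minimal-length representative of its coset `w * W_J`,
i.e. `w ∈ Wᴶ`. -/
def IsMinRep (cs : CoxeterSystem M W) (J : Set B) (w : W) : Prop :=
  ∀ x ∈ ParabolicSubgroup cs J, cs.length w ≤ cs.length (w * x)

/-- The set `Aᴶ_{u,v}` of atoms of `[u,v]` lying in `Wᴶ`. -/
def AtomSet (cs : CoxeterSystem M W) (J : Set B) (u v : W) : Set W :=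
  {a | IsMinRep cs J a ∧ BruhatCovBy cs u a ∧ BruhatLE cs a v}

/-- The parabolic quotient interval `[u,v]ᴶ = [u,v] ∩ Wᴶ`. -/
def QuotInterval (cs : CoxeterSystem M W) (J : Set B) (u v : W) : Set W :=
  {y | IsMinRep cs J y ∧ BruhatLE cs u y ∧ BruhatLE cs y v}

/-- The family of ordinary Kazhdan–Lusztig `R`-polynomials, characterized by
its defining recursion. -/
def IsRFamily (cs : CoxeterSystem M W) (R : W → W → Polynomial ℤ) : Prop :=
  (∀ u v, ¬ BruhatLE cs u v → R u v = 0) ∧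
  (∀ u, R u u = 1) ∧
  (∀ (i : B) (u v : W), cs.length (cs.simple i * v) < cs.length v →
    (cs.length (cs.simple i * u) < cs.length u →
      R u v = R (cs.simple i * u) (cs.simple i * v)) ∧
    (cs.length u < cs.length (cs.simple i * u) →
      R u v = (X - 1) * R u (cs.simple i * v)
            + X * R (cs.simple i * u) (cs.simple i * v)))

/-- The family of ordinary Kazhdan–Lusztig polynomials `P_{u,v}`, characterized
by its defining properties, relative to a family `R` of `R`-polynomials. -/
def IsPFamily (cs : CoxeterSystem M W) (R P : W → W → Polynomial ℤ) : Prop :=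
  (∀ u v, ¬ BruhatLE cs u v → P u v = 0) ∧
  (∀ u, P u u = 1) ∧
  (∀ u v, BruhatLT cs u v →
    2 * (P u v).natDegree + 1 ≤ cs.length v - cs.length u) ∧
  (∀ u v, BruhatLE cs u v →
    (P u v).reflect (cs.length v - cs.length u) =
      ∑ᶠ σ ∈ BruhatInterval cs u v, R u σ * P σ v)

/-- The family of parabolic `R`-polynomials `R^{J,x}_{u,v}` of Deodhar,
characterized by its defining recursion. -/
def IsParaRFamily (cs : CoxeterSystem M W) (J : Set B) (x : Polynomial ℤ)
    (R : W → W → Polynomial ℤ) : Prop :=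
  (∀ u v, IsMinRep cs J u → IsMinRep cs J v → ¬ BruhatLE cs u v → R u v = 0) ∧
  (∀ u, IsMinRep cs J u → R u u = 1) ∧
  (∀ (i : B) (u v : W), IsMinRep cs J u → IsMinRep cs J v →
    cs.length (cs.simple i * v) < cs.length v →
    (cs.length (cs.simple i * u) < cs.length u →
      R u v = R (cs.simple i * u) (cs.simple i * v)) ∧
    (cs.length u < cs.length (cs.simple i * u) →
      IsMinRep cs J (cs.simple i * u) →
      R u v = (X - 1) * R u (cs.simple i * v)
            + X * R (cs.simple i * u) (cs.simple i * v)) ∧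
    (cs.length u < cs.length (cs.simple i * u) →
      ¬ IsMinRep cs J (cs.simple i * u) →
      R u v = (X - 1 - x) * R u (cs.simple i * v)))

/-- The family of parabolic Kazhdan–Lusztig polynomials `P^{J,x}_{u,v}` of
Deodhar, characterized by its defining properties, relative to a family `R`
of parabolic `R`-polynomials. -/
def IsParaPFamily (cs : CoxeterSystem M W) (J : Set B)
    (R P : W → W → Polynomial ℤ) : Prop :=
  (∀ u v, IsMinRep cs J u → IsMinRep cs J v → ¬ BruhatLE cs u v → P u v = 0) ∧
  (∀ u, IsMinRep cs J u → P u u = 1) ∧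
  (∀ u v, IsMinRep cs J u → IsMinRep cs J v → BruhatLT cs u v →
    2 * (P u v).natDegree + 1 ≤ cs.length v - cs.length u) ∧
  (∀ u v, IsMinRep cs J u → IsMinRep cs J v → BruhatLE cs u v →
    (P u v).reflect (cs.length v - cs.length u) =
      ∑ᶠ σ ∈ QuotInterval cs J u v, R u σ * P σ v)


section StrongExchange
open List

namespace SE

open CoxeterSystem

variable (cs : CoxeterSystem M W)

local prefix:100 "s" => cs.simple
local prefix:100 "π" => cs.wordProd
local prefix:100 "ℓ" => cs.length

open scoped Classical

/-- The sign: `(-1)^(number of occurrences of t in l)`, as a product. -/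
noncomputable def sgn (t : W) (l : List W) : ℤˣ :=
  (l.map (fun r => if t = r then (-1 : ℤˣ) else 1)).prod

@[simp] theorem sgn_nil (t : W) : sgn t [] = 1 := rfl

theorem sgn_cons (t r : W) (l : List W) :
    sgn t (r :: l) = (if t = r then (-1 : ℤˣ) else 1) * sgn t l := by
  simp [sgn]

theorem sgn_append (t : W) (l l' : List W) :
    sgn t (l ++ l') = sgn t l * sgn t l' := by
  simp [sgn]

theorem sgn_reverse (t : W) (l : List W) : sgn t l.reverse = sgn t l := by
  rw [sgn, sgn, List.map_reverse, List.prod_reverse]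

theorem sgn_eq_pow_count (t : W) (l : List W) :
    sgn t l = (-1 : ℤˣ) ^ (l.count t) := by
  induction l with
  | nil => rfl
  | cons r l ih =>
    rw [sgn_cons, ih, List.count_cons]
    by_cases h : t = r
    · have hr : (r == t) = true := by simp [h.symm]
      rw [if_pos h, hr, if_pos rfl, pow_succ, mul_comm]
    · have hr : ¬ ((r == t) = true) := by
        rw [beq_iff_eq]; exact fun hh => h hh.symm
      rw [if_neg h, if_neg hr, Nat.add_zero, one_mul]

theorem sgn_eq_one_of_not_mem {t : W} {l : List W} (h : t ∉ l) : sgn t l = 1 := by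
  rw [sgn_eq_pow_count, List.count_eq_zero_of_not_mem h, pow_zero]

theorem mem_of_sgn_ne_one {t : W} {l : List W} (h : sgn t l ≠ 1) : t ∈ l := by
  by_contra hh; exact h (sgn_eq_one_of_not_mem hh)

theorem sgn_eq_prod_range (t : W) (l : List W) :
    sgn t l = ∏ j ∈ Finset.range l.length,
      (if t = l.getD j 1 then (-1 : ℤˣ) else 1) := by
  induction l with
  | nil => simp
  | cons r l ih =>
    rw [sgn_cons, ih, List.length_cons, Finset.prod_range_succ']
    simp [mul_comm]

/-- The basic "reflection" endomorphism of `W × ℤˣ`. -/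
noncomputable def phi (i : B) : Function.End (W × ℤˣ) :=
  fun p => (s i * p.1 * s i, if p.1 = s i then -p.2 else p.2)

theorem phi_word (ω : List B) (t : W) (ε : ℤˣ) :
    ((ω.map (phi cs)).prod) (t, ε) =
      (π ω * t * (π ω)⁻¹, ε * sgn t (cs.rightInvSeq ω)) := by
  induction ω generalizing ε with
  | nil =>
    show (t, ε) = _
    rw [rightInvSeq_nil, cs.wordProd_nil]
    simp [sgn]
  | cons i ω ih =>
    have hmul : ∀ (f g : Function.End (W × ℤˣ)) (x : W × ℤˣ), (f * g) x = f (g x) := fun _ _ _ => rfl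
    rw [List.map_cons, List.prod_cons, hmul, ih]
    show (s i * (π ω * t * (π ω)⁻¹) * s i, _) = _
    rw [rightInvSeq, sgn_cons, cs.wordProd_cons]
    rw [Prod.mk.injEq]
    constructor
    · rw [mul_inv_rev, cs.inv_simple]; group
    · by_cases h : π ω * t * (π ω)⁻¹ = s i
      · have h' : t = (π ω)⁻¹ * s i * π ω := by
          rw [← h]; group
        rw [if_pos h, if_pos h', neg_one_mul, mul_neg]
      · have h' : ¬ t = (π ω)⁻¹ * s i * π ω := by
          intro hh; apply h; rw [hh]; group
        rw [if_neg h, if_neg h', one_mul]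

theorem conj_pow_eq (b p : W) (hb : b * p * b = p⁻¹) (hbb : b * b = 1) (k : ℕ) :
    (p ^ k)⁻¹ * b * p ^ k = b * p ^ (2 * k) := by
  have hpb : p⁻¹ * b = b * p := by
    rw [← hb, mul_assoc, mul_assoc, hbb, mul_one]
  induction k with
  | zero => simp
  | succ k ih =>
    have h1 : (p ^ (k+1))⁻¹ * b * p ^ (k+1) = p⁻¹ * ((p ^ k)⁻¹ * b * p ^ k) * p := by
      rw [pow_succ]; group
    rw [h1, ih, ← mul_assoc, hpb]
    have : 2 * (k + 1) = (2 * k) + 1 + 1 := by ring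
    rw [this, pow_succ, pow_succ]
    group


theorem list_prod_range {Mo : Type*} [CommMonoid Mo] (h : ℕ → Mo) (n : ℕ) :
    ((List.range n).map h).prod = ∏ j ∈ Finset.range n, h j := by
  induction n with
  | zero => simp
  | succ n ih => rw [List.range_succ, Finset.prod_range_succ, List.map_append, List.prod_append, ih]; simp

theorem sgn_map {α : Type*} (t : W) (g : α → W) (l : List α) :
    sgn t (l.map g) = (l.map (fun r => if t = g r then (-1 : ℤˣ) else 1)).prod := by
  rw [sgn, List.map_map]; rfl

theorem simple_conj_pow (i i' : B) (k : ℕ) :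
    ((s i * s i') ^ k)⁻¹ * s i' * (s i * s i') ^ k = s i' * (s i * s i') ^ (2 * k) := by
  apply conj_pow_eq
  · rw [mul_inv_rev, cs.inv_simple, cs.inv_simple, mul_assoc, mul_assoc,
      cs.simple_mul_simple_self, mul_one]
  · exact cs.simple_mul_simple_self i'

/-- The word `[i, i', i, i', ...]` of length `2 * m`. -/
def alt2 (i i' : B) : ℕ → List B
  | 0 => []
  | m + 1 => i :: i' :: alt2 i i' m

theorem prodRep (i i' : B) (m : ℕ) :
    π (alt2 i i' m) = (s i * s i') ^ m := by
  induction m with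
  | zero => simp [alt2]
  | succ m ih =>
    rw [alt2, cs.wordProd_cons, cs.wordProd_cons, ih, pow_succ', mul_assoc]

theorem risRep (i i' : B) (m : ℕ) :
    cs.rightInvSeq (alt2 i i' m) =
      ((List.range (2 * m)).map (fun k => s i' * (s i * s i') ^ k)).reverse := by
  induction m with
  | zero => simp [alt2]
  | succ m ih =>
    have h2 : 2 * (m + 1) = (2 * m + 1) + 1 := by ring
    rw [h2, List.range_succ, List.range_succ]
    rw [List.map_append, List.map_append, List.reverse_append, List.reverse_append]
    rw [alt2, rightInvSeq, rightInvSeq, ih]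
    have hq := prodRep cs i i' m
    have e2 : (π (alt2 i i' m))⁻¹ * s i' * π (alt2 i i' m)
        = s i' * (s i * s i') ^ (2 * m) := by
      rw [hq]; exact simple_conj_pow cs i i' m
    have e1 : (π (i' :: alt2 i i' m))⁻¹ * s i * π (i' :: alt2 i i' m)
        = s i' * (s i * s i') ^ (2 * m + 1) := by
      rw [cs.wordProd_cons, hq, mul_inv_rev, cs.inv_simple]
      have hc := simple_conj_pow cs i i' m
      have key : s i * (s i' * (s i * s i') ^ m) = (s i * s i') ^ m * (s i * s i') := by
        rw [← mul_assoc]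
        exact (pow_mul_comm' (s i * s i') m).symm
      rw [mul_assoc (((s i * s i') ^ m)⁻¹ * s i'), key, ← mul_assoc, hc, pow_succ, mul_assoc]
    rw [e1, e2]
    simp

theorem prod_map_alt2 (g : B → Function.End (W × ℤˣ)) (i i' : B) (m : ℕ) :
    ((alt2 i i' m).map g).prod = (g i * g i') ^ m := by
  induction m with
  | zero => simp [alt2]
  | succ m ih =>
    rw [alt2, List.map_cons, List.map_cons, List.prod_cons, List.prod_cons, ih, pow_succ',
      mul_assoc]

theorem phi_liftable : CoxeterMatrix.IsLiftable M (phi cs) := by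
  intro i i'
  rw [← prod_map_alt2 (phi cs) i i' (M i i')]
  funext x
  obtain ⟨t, ε⟩ := x
  rw [phi_word, prodRep cs, cs.simple_mul_simple_pow]
  show _ = (t, ε)
  rw [Prod.mk.injEq]
  constructor
  · group
  · rw [risRep cs, sgn_reverse, sgn_map, list_prod_range]
    have hsplit : ∀ j, (if t = s i' * (s i * s i') ^ (M i i' + j) then (-1 : ℤˣ) else 1)
        = (if t = s i' * (s i * s i') ^ j then (-1 : ℤˣ) else 1) := by
      intro j
      congr 2
      rw [pow_add, cs.simple_mul_simple_pow, one_mul]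
    have h2 : 2 * M i i' = M i i' + M i i' := by ring
    rw [h2, Finset.prod_range_add]
    conv_lhs => rw [show (∏ j ∈ Finset.range (M i i'),
      (if t = s i' * (s i * s i') ^ (M i i' + j) then (-1 : ℤˣ) else 1))
        = ∏ j ∈ Finset.range (M i i'),
      (if t = s i' * (s i * s i') ^ j then (-1 : ℤˣ) else 1) from Finset.prod_congr rfl
        (fun j _ => hsplit j)]
    rw [← sq, Int.units_sq, mul_one]

theorem risAppend (α β : List B) :
    cs.rightInvSeq (α ++ β) =
      (cs.rightInvSeq α).map (fun r => (π β)⁻¹ * r * π β) ++ cs.rightInvSeq β := by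
  induction α with
  | nil => simp
  | cons a α ih =>
    rw [List.cons_append, rightInvSeq, rightInvSeq, ih, List.map_cons, List.cons_append]
    congr 1
    rw [cs.wordProd_append, mul_inv_rev]
    group

theorem lis_eq_map_ris (ω : List B) :
    cs.leftInvSeq ω = (cs.rightInvSeq ω).map (fun r => π ω * r * (π ω)⁻¹) := by
  induction ω with
  | nil => simp
  | cons i ω ih =>
    rw [leftInvSeq, rightInvSeq, ih, List.map_cons, List.map_map, cs.wordProd_cons]
    congr 1
    · rw [mul_inv_rev]
      group
    · apply List.map_congr_left
      intro r _
      show s i * (π ω * r * (π ω)⁻¹) * (s i)⁻¹ = _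
      rw [mul_inv_rev]
      group

theorem sgn_conj (g t : W) (l : List W) :
    sgn t (l.map (fun r => g * r * g⁻¹)) = sgn (g⁻¹ * t * g) l := by
  rw [sgn_map, sgn]
  congr 1
  apply List.map_congr_left
  intro r _
  congr 1
  apply propext
  constructor
  · intro h
    rw [h]; group
  · intro h
    rw [← h]; group

noncomputable def eta : W →* Function.End (W × ℤˣ) := cs.lift ⟨phi cs, phi_liftable cs⟩

theorem eta_simple (i : B) : eta cs (s i) = phi cs i :=
  cs.lift_apply_simple (phi_liftable cs) i

theorem eta_wordProd (ω : List B) : eta cs (π ω) = (ω.map (phi cs)).prod := by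
  induction ω with
  | nil => rw [cs.wordProd_nil, map_one]; rfl
  | cons i ω ih =>
    rw [cs.wordProd_cons, map_mul, ih, List.map_cons, List.prod_cons, eta_simple]

theorem eta_apply (ω : List B) (t : W) (ε : ℤˣ) :
    eta cs (π ω) (t, ε) = (π ω * t * (π ω)⁻¹, ε * sgn t (cs.rightInvSeq ω)) := by
  rw [eta_wordProd, phi_word]

noncomputable def esgn (w t : W) : ℤˣ := (eta cs w (t, 1)).2

theorem esgn_eq_sgn {w : W} {ω : List B} (h : π ω = w) (t : W) :
    esgn cs w t = sgn t (cs.rightInvSeq ω) := by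
  subst h
  rw [esgn, eta_apply, one_mul]

theorem eta_pair (w t : W) (ε : ℤˣ) :
    eta cs w (t, ε) = (w * t * w⁻¹, ε * esgn cs w t) := by
  obtain ⟨ω, rfl⟩ := cs.wordProd_surjective w
  rw [eta_apply, esgn_eq_sgn cs rfl]

theorem esgn_refl {t : W} (ht : cs.IsReflection t) : esgn cs t t = -1 := by
  obtain ⟨u, i, rfl⟩ := ht
  obtain ⟨υ, rfl⟩ := cs.wordProd_surjective u
  have hκ : π (υ ++ ([i] ++ υ.reverse)) = π υ * s i * (π υ)⁻¹ := by
    rw [cs.wordProd_append, cs.wordProd_append, cs.wordProd_singleton, cs.wordProd_reverse,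
      mul_assoc]
  rw [esgn_eq_sgn cs hκ, risAppend, sgn_append]
  have hris : cs.rightInvSeq ([i] ++ υ.reverse) =
      ((π υ.reverse)⁻¹ * s i * π υ.reverse) :: cs.rightInvSeq υ.reverse := by
    rw [List.singleton_append, rightInvSeq]
  rw [hris]
  have hmid : (π υ.reverse)⁻¹ * s i * π υ.reverse = π υ * s i * (π υ)⁻¹ := by
    rw [cs.wordProd_reverse, inv_inv]
  rw [hmid, sgn_cons, if_pos rfl]
  -- first factor: conjugated ris gives sgn (s i) (ris υ)
  have hA : sgn (π υ * s i * (π υ)⁻¹)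
      ((cs.rightInvSeq υ).map (fun r => (π ([i] ++ υ.reverse))⁻¹ * r * π ([i] ++ υ.reverse)))
      = sgn (s i) (cs.rightInvSeq υ) := by
    have hc : π ([i] ++ υ.reverse) = s i * (π υ)⁻¹ := by
      rw [cs.wordProd_append, cs.wordProd_singleton, cs.wordProd_reverse]
    rw [hc]
    have : (fun r => (s i * (π υ)⁻¹)⁻¹ * r * (s i * (π υ)⁻¹))
        = (fun r => ((s i * (π υ)⁻¹)⁻¹) * r * (((s i * (π υ)⁻¹)⁻¹))⁻¹) := by
      funext r; rw [inv_inv]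
    rw [this, sgn_conj]
    congr 1
    rw [inv_inv]
    group
  rw [hA]
  -- third factor
  have hB : sgn (π υ * s i * (π υ)⁻¹) (cs.rightInvSeq υ.reverse)
      = sgn (s i) (cs.rightInvSeq υ) := by
    rw [cs.rightInvSeq_reverse, sgn_reverse, lis_eq_map_ris, sgn_conj]
    congr 1
    group
  rw [hB]
  rw [neg_one_mul, mul_neg, ← sq, Int.units_sq]

theorem esgn_neg_of_inversion {w t : W} (ht : cs.IsReflection t) (h : ℓ (w * t) < ℓ w) :
    esgn cs w t = -1 := by
  rcases Int.units_eq_one_or (esgn cs w t) with h1 | h1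
  · exfalso
    have e2 : eta cs (w * t) (t, 1) = (w * t * w⁻¹, -1) := by
      rw [map_mul]
      show eta cs w (eta cs t (t, 1)) = _
      rw [eta_pair cs t t 1, esgn_refl cs ht, one_mul]
      have htt : t * t * t⁻¹ = t := by rw [ht.mul_self, one_mul, ht.inv]
      rw [htt, eta_pair cs w t (-1), h1, mul_one]
    have e3 : esgn cs (w * t) t = -1 := by rw [esgn, e2]
    obtain ⟨ω, hred, hπ⟩ := cs.exists_reduced_word' (w * t)
    have hsgn : sgn t (cs.rightInvSeq ω) = -1 := by rw [← esgn_eq_sgn cs hπ.symm, e3]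
    have hmem : t ∈ cs.rightInvSeq ω := mem_of_sgn_ne_one (by rw [hsgn]; decide)
    have hinv := cs.isRightInversion_of_mem_rightInvSeq hred hmem
    rw [← hπ] at hinv
    have : ℓ (w * t * t) < ℓ (w * t) := hinv.2
    rw [mul_assoc, ht.mul_self, mul_one] at this
    omega
  · exact h1

theorem strong_exchange {w t : W} (ht : cs.IsReflection t) (h : ℓ (w * t) < ℓ w)
    {ω : List B} (hred : cs.IsReduced ω) (hπ : π ω = w) : t ∈ cs.rightInvSeq ω := by
  have h1 := esgn_neg_of_inversion cs ht h
  rw [esgn_eq_sgn cs hπ] at h1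
  exact mem_of_sgn_ne_one (by rw [h1]; decide)

theorem strong_exchange' {w t : W} (ht : cs.IsReflection t) (h : ℓ (w * t) < ℓ w)
    {ω : List B} (hred : cs.IsReduced ω) (hπ : π ω = w) :
    ∃ j < ω.length, w * t = π (ω.eraseIdx j) := by
  have hmem := strong_exchange cs ht h hred hπ
  obtain ⟨j, hj, hget⟩ := List.mem_iff_getElem.mp hmem
  rw [cs.length_rightInvSeq] at hj
  refine ⟨j, hj, ?_⟩
  rw [← hπ, ← cs.wordProd_mul_getD_rightInvSeq ω j]
  congr 1
  rw [← hget, List.getD_eq_getElem _ 1 (by rw [cs.length_rightInvSeq]; exact hj)]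

end SE

namespace BR

open CoxeterSystem SE

variable (cs : CoxeterSystem M W)

local prefix:100 "s" => cs.simple
local prefix:100 "π" => cs.wordProd
local prefix:100 "ℓ" => cs.length

theorem le_refl (x : W) : BruhatLE cs x x := Relation.ReflTransGen.refl

theorem le_trans {x y z : W} (h1 : BruhatLE cs x y) (h2 : BruhatLE cs y z) :
    BruhatLE cs x z := Relation.ReflTransGen.trans h1 h2

theorem length_le_of_le {x y : W} (h : BruhatLE cs x y) : ℓ x ≤ ℓ y := by
  induction h with
  | refl => exact Nat.le_refl _
  | tail _ hstep ih => obtain ⟨t, _, _, hlt⟩ := hstep; omega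

theorem eq_or_length_lt_of_le {x y : W} (h : BruhatLE cs x y) : x = y ∨ ℓ x < ℓ y := by
  induction h with
  | refl => exact Or.inl rfl
  | tail _ hstep ih =>
    obtain ⟨t, _, _, hlt⟩ := hstep
    rcases ih with rfl | hl
    · exact Or.inr hlt
    · exact Or.inr (by omega)

theorem length_lt_of_lt {x y : W} (h : BruhatLT cs x y) : ℓ x < ℓ y := by
  rcases eq_or_length_lt_of_le cs h.1 with rfl | hl
  · exact absurd rfl h.2
  · exact hl

theorem eq_of_le_of_length_ge {x y : W} (h : BruhatLE cs x y) (hl : ℓ y ≤ ℓ x) : x = y := by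
  rcases eq_or_length_lt_of_le cs h with rfl | hlt
  · rfl
  · omega

theorem step_le {x t : W} (ht : cs.IsReflection t) (hl : ℓ x < ℓ (x * t)) :
    BruhatLE cs x (x * t) :=
  Relation.ReflTransGen.single ⟨t, ht, rfl, hl⟩

theorem step_ge {x t : W} (ht : cs.IsReflection t) (hl : ℓ (x * t) < ℓ x) :
    BruhatLE cs (x * t) x := by
  have : x = (x * t) * t := by rw [mul_assoc, ht.mul_self, mul_one]
  exact Relation.ReflTransGen.single ⟨t, ht, this, hl⟩

theorem inv_le_inv {x y : W} (h : BruhatLE cs x y) : BruhatLE cs x⁻¹ y⁻¹ := by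
  induction h with
  | refl => exact le_refl cs _
  | tail hxz hstep ih =>
    rename_i z _
    obtain ⟨t, ht, rfl, hlt⟩ := hstep
    refine Relation.ReflTransGen.tail ih ⟨z * t * z⁻¹, ht.conj z, ?_, ?_⟩
    · rw [mul_inv_rev, ht.inv]
      group
    · rw [cs.length_inv, cs.length_inv]
      exact hlt

theorem length_mul_simple_dichotomy (w : W) (i : B) :
    ℓ (w * s i) = ℓ w + 1 ∨ ℓ (w * s i) + 1 = ℓ w := by
  rcases cs.length_mul_simple w i with h | h
  · exact Or.inl h
  · exact Or.inr (by omega)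

theorem exists_reduced_sublist : ∀ (n : ℕ) (ω : List B), ω.length ≤ n →
    ∃ ω', ω' <+ ω ∧ cs.IsReduced ω' ∧ π ω' = π ω := by
  intro n
  induction n with
  | zero =>
    intro ω hω
    rw [Nat.le_zero, List.length_eq_zero_iff] at hω
    subst hω
    exact ⟨[], List.Sublist.refl _, by simp [CoxeterSystem.IsReduced], rfl⟩
  | succ n ih =>
    intro ω hω
    rcases List.eq_nil_or_concat ω with rfl | ⟨κ, i, rfl⟩
    · exact ⟨[], List.Sublist.refl _, by simp [CoxeterSystem.IsReduced], rfl⟩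
    · simp only [List.concat_eq_append] at hω ⊢
      obtain ⟨κ', hsub, hred, hprod⟩ := ih κ (by simp only [List.length_append, List.length_singleton] at hω; omega)
      rcases length_mul_simple_dichotomy cs (π κ) i with hup | hdown
      · refine ⟨κ' ++ [i], hsub.append_right _, ?_, ?_⟩
        · show ℓ (π (κ' ++ [i])) = _
          have hr : ℓ (π κ') = κ'.length := hred
          rw [cs.wordProd_append, cs.wordProd_singleton, hprod, hup, List.length_append,
            List.length_singleton, ← hprod, hr]
        · rw [cs.wordProd_append, cs.wordProd_append, hprod]
      · have hlt : ℓ (π κ' * s i) < ℓ (π κ') := by rw [hprod]; omega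
        obtain ⟨j, hj, heq⟩ := strong_exchange' cs (cs.isReflection_simple i) hlt hred rfl
        have hjlen : j < κ'.length := hj
        obtain ⟨ω', hsub', hred', hprod'⟩ := ih (κ'.eraseIdx j)
          (by
            have h1 := κ'.length_eraseIdx_add_one hjlen
            have h2 := hsub.length_le
            simp only [List.length_append, List.length_singleton] at hω
            omega)
        refine ⟨ω', ?_, hred', ?_⟩
        · exact hsub'.trans ((κ'.eraseIdx_sublist j).trans
            (hsub.trans (List.sublist_append_left κ [i])))
        · rw [hprod', ← heq, hprod, cs.wordProd_append, cs.wordProd_singleton]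

theorem exists_sublist_of_le {u w : W} (h : BruhatLE cs u w) :
    ∀ {ω : List B}, cs.IsReduced ω → π ω = w →
    ∃ ω', ω' <+ ω ∧ cs.IsReduced ω' ∧ π ω' = u := by
  induction h with
  | refl => exact fun hred hπ => ⟨_, List.Sublist.refl _, hred, hπ⟩
  | tail hxz hstep ih =>
    rename_i z y
    obtain ⟨t, ht, rfl, hlt⟩ := hstep
    intro ω hred hπ
    have hzt : ℓ (z * t * t) < ℓ (z * t) := by
      rw [mul_assoc, ht.mul_self, mul_one]
      exact hlt
    obtain ⟨j, hj, heq⟩ := strong_exchange' cs ht hzt hred hπ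
    have hz : π (ω.eraseIdx j) = z := by
      rw [← heq, mul_assoc, ht.mul_self, mul_one]
    obtain ⟨ω₁, hsub₁, hred₁, hπ₁⟩ :=
      exists_reduced_sublist cs (ω.eraseIdx j).length (ω.eraseIdx j) (Nat.le_refl _)
    rw [hz] at hπ₁
    obtain ⟨ω', hsub', hred', hπ'⟩ := ih hred₁ hπ₁
    exact ⟨ω', (hsub'.trans hsub₁).trans (ω.eraseIdx_sublist j), hred', hπ'⟩

/-- The two fundamental lifting lemmas, proven together by strong induction. -/
theorem lift_main : ∀ (n : ℕ) {x y : W} (i : B), ℓ y ≤ n → BruhatLE cs x y →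
    (ℓ x < ℓ (x * s i) → ℓ y < ℓ (y * s i) → BruhatLE cs (x * s i) (y * s i)) ∧
    (ℓ x < ℓ (x * s i) → ℓ (y * s i) < ℓ y → BruhatLE cs (x * s i) y) := by
  intro n
  induction n using Nat.strong_induction_on with
  | _ n IH =>
    intro x y i hyn hxy
    rcases Relation.ReflTransGen.cases_tail hxy with rfl | ⟨z, hxz, t, ht, rfl, hstep⟩
    · exact ⟨fun _ _ => le_refl cs _, fun h1 h2 => by omega⟩
    · -- y = z * t with ℓ z < ℓ (z * t)
      have hzn : ℓ z < n := lt_of_lt_of_le hstep hyn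
      have IHz := IH (ℓ z) hzn (x := x) (y := z) i (Nat.le_refl _) hxz
      constructor
      · intro hx hy
        have hy1 : ℓ (z * t * s i) = ℓ (z * t) + 1 := by
          rcases length_mul_simple_dichotomy cs (z * t) i with h | h
          · exact h
          · omega
        rcases length_mul_simple_dichotomy cs z i with hz1 | hz1
        · -- z ascends
          have h1 : BruhatLE cs (x * s i) (z * s i) := IHz.1 hx (by omega)
          have h2 : BruhatLE cs (z * s i) (z * t * s i) := by
            have hrefl : cs.IsReflection (s i * t * s i) := by
              have := ht.conj (s i)
              rwa [cs.inv_simple] at this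
            have hmul : z * t * s i = (z * s i) * (s i * t * s i) := by
              have : s i * (s i * t * s i) = t * s i := by
                rw [← mul_assoc, ← mul_assoc, cs.simple_mul_simple_self, one_mul]
              rw [mul_assoc z (s i), this, ← mul_assoc]
            rw [hmul]
            apply step_le cs hrefl
            rw [← hmul, hy1, hz1]
            omega
          exact le_trans cs h1 h2
        · -- z descends
          have h1 : BruhatLE cs (x * s i) z := IHz.2 hx (by omega)
          have h2 : BruhatLE cs z (z * t) := step_le cs ht hstep
          have h3 : BruhatLE cs (z * t) (z * t * s i) :=
            step_le cs (cs.isReflection_simple i) (by omega)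
          exact le_trans cs h1 (le_trans cs h2 h3)
      · intro hx hy
        rcases length_mul_simple_dichotomy cs z i with hz1 | hz1
        · -- z ascends
          have h1 : BruhatLE cs (x * s i) (z * s i) := IHz.1 hx (by omega)
          have hrefl : cs.IsReflection (s i * t * s i) := by
            have := ht.conj (s i)
            rwa [cs.inv_simple] at this
          have hmul : z * t * s i = (z * s i) * (s i * t * s i) := by
            have : s i * (s i * t * s i) = t * s i := by
              rw [← mul_assoc, ← mul_assoc, cs.simple_mul_simple_self, one_mul]
            rw [mul_assoc z (s i), this, ← mul_assoc]
          have hne : ℓ (z * t * s i) ≠ ℓ (z * s i) := by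
            rw [hmul]
            exact hrefl.length_mul_left_ne (z * s i)
          rcases Nat.lt_or_ge (ℓ (z * s i)) (ℓ (z * t * s i)) with hc | hc
          · -- z * s i ≤ z * t * s i ≤ z * t
            have h2 : BruhatLE cs (z * s i) (z * t * s i) := by
              rw [hmul]
              apply step_le cs hrefl
              rw [← hmul]
              exact hc
            have h3 : BruhatLE cs (z * t * s i) (z * t) :=
              step_ge cs (cs.isReflection_simple i) hy
            exact le_trans cs h1 (le_trans cs h2 h3)
          · -- use strong exchange to show z * t = z * s i
            have hc' : ℓ (z * t * s i) < ℓ (z * s i) := by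
              omega
            obtain ⟨κ, hκred, hκ⟩ := cs.exists_reduced_word' z
            have hredzi : cs.IsReduced (κ ++ [i]) := by
              show ℓ (π (κ ++ [i])) = _
              have hr : ℓ (π κ) = κ.length := hκred
              rw [cs.wordProd_append, cs.wordProd_singleton, ← hκ, hz1, List.length_append,
                List.length_singleton, ← hr, hκ]
            have hππ : π (κ ++ [i]) = z * s i := by
              rw [cs.wordProd_append, cs.wordProd_singleton, ← hκ]
            have hexc : ℓ ((z * s i) * (s i * t * s i)) < ℓ (z * s i) := by
              rw [← hmul]
              exact hc'
            obtain ⟨j, hj, heq⟩ := strong_exchange' cs hrefl hexc hredzi hππ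
            rw [← hmul] at heq
            rcases Nat.lt_or_ge j κ.length with hjκ | hjκ
            · -- contradiction : ℓ (z * t) too small
              exfalso
              rw [List.eraseIdx_append_of_lt_length hjκ] at heq
              have : z * t = π (κ.eraseIdx j) := by
                have := congrArg (fun r => r * s i) heq
                rw [mul_assoc, cs.simple_mul_simple_self, mul_one, cs.wordProd_append,
                  cs.wordProd_singleton, mul_assoc, cs.simple_mul_simple_self, mul_one] at this
                exact this
              have hlen : ℓ (z * t) ≤ κ.length - 1 := by
                rw [this]
                calc ℓ (π (κ.eraseIdx j)) ≤ (κ.eraseIdx j).length := cs.length_wordProd_le _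
                  _ ≤ κ.length - 1 := by
                      have := κ.length_eraseIdx_add_one hjκ
                      omega
              have hz2 : ℓ z = κ.length := by rw [hκ]; exact hκred
              omega
            · -- j is the last position : z * t = z * s i
              have hj' : j = κ.length := by
                simp only [List.length_append, List.length_singleton] at hj
                omega
              have herase : (κ ++ [i]).eraseIdx j = κ := by
                subst hj'
                rw [List.eraseIdx_append_of_length_le (Nat.le_refl _), Nat.sub_self]
                simp
              rw [herase, ← hκ] at heq
              -- heq : z * t * s i = z, so z * t = z * s i
              have : z * t = z * s i := by
                have := congrArg (fun r => r * s i) heq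
                rw [mul_assoc, cs.simple_mul_simple_self, mul_one] at this
                exact this
              rw [this]
              exact h1
        · -- z descends
          have h1 : BruhatLE cs (x * s i) z := IHz.2 hx (by omega)
          have h2 : BruhatLE cs z (z * t) := step_le cs ht hstep
          exact le_trans cs h1 h2

theorem lift_asc_asc {x y : W} {i : B} (hxy : BruhatLE cs x y)
    (hx : ℓ x < ℓ (x * s i)) (hy : ℓ y < ℓ (y * s i)) :
    BruhatLE cs (x * s i) (y * s i) :=
  (lift_main cs (ℓ y) i (Nat.le_refl _) hxy).1 hx hy

theorem lift_asc_desc {x y : W} {i : B} (hxy : BruhatLE cs x y)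
    (hx : ℓ x < ℓ (x * s i)) (hy : ℓ (y * s i) < ℓ y) :
    BruhatLE cs (x * s i) y :=
  (lift_main cs (ℓ y) i (Nat.le_refl _) hxy).2 hx hy

theorem le_of_sublist : ∀ (n : ℕ) {ω ω' : List B}, ω.length ≤ n → cs.IsReduced ω →
    ω' <+ ω → BruhatLE cs (π ω') (π ω) := by
  intro n
  induction n with
  | zero =>
    intro ω ω' hn _ hsub
    rw [Nat.le_zero, List.length_eq_zero_iff] at hn
    subst hn
    rw [List.sublist_nil.mp hsub]
    exact le_refl cs _
  | succ n ih =>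
    intro ω ω' hn hred hsub
    rcases List.eq_nil_or_concat ω with rfl | ⟨κ, i, rfl⟩
    · rw [List.sublist_nil.mp hsub]
      exact le_refl cs _
    · simp only [List.concat_eq_append] at hn hred hsub ⊢
      have hκred : cs.IsReduced κ := by
        have := hred.take κ.length
        rwa [List.take_left] at this
      have hκasc : ℓ (π κ) < ℓ (π κ * s i) := by
        have h1 : ℓ (π (κ ++ [i])) = κ.length + 1 := by
          have h0 : ℓ (π (κ ++ [i])) = (κ ++ [i]).length := hred
          rwa [List.length_append, List.length_singleton] at h0
        have h2 : ℓ (π κ) = κ.length := hκred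
        rw [cs.wordProd_append, cs.wordProd_singleton] at h1
        omega
      rcases List.sublist_append_iff.mp hsub with ⟨ω₁, ω₂, rfl, hsub₁, hsub₂⟩
      have hωn : κ.length ≤ n := by
        simp only [List.length_append, List.length_singleton] at hn
        omega
      rcases List.sublist_singleton.mp hsub₂ with rfl | rfl
      · -- ω' = ω₁ <+ κ
        rw [List.append_nil]
        refine le_trans cs (ih hωn hκred hsub₁) ?_
        rw [cs.wordProd_append, cs.wordProd_singleton]
        exact step_le cs (cs.isReflection_simple i) hκasc
      · -- ω' = ω₁ ++ [i]
        have h1 : BruhatLE cs (π ω₁) (π κ) := ih hωn hκred hsub₁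
        rw [cs.wordProd_append, cs.wordProd_singleton, cs.wordProd_append,
          cs.wordProd_singleton]
        rcases length_mul_simple_dichotomy cs (π ω₁) i with hasc | hdesc
        · exact lift_asc_asc cs h1 (by omega) hκasc
        · have h2 : BruhatLE cs (π ω₁ * s i) (π ω₁) :=
            step_ge cs (cs.isReflection_simple i) (by omega)
          refine le_trans cs h2 (le_trans cs h1 ?_)
          exact step_le cs (cs.isReflection_simple i) hκasc

theorem one_le (w : W) : BruhatLE cs 1 w := by
  obtain ⟨ω, hred, hπ⟩ := cs.exists_reduced_word' w
  have := le_of_sublist cs ω.length (Nat.le_refl _) hred (List.nil_sublist ω)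
  rwa [cs.wordProd_nil, ← hπ] at this

/-- Lifting: `x ≤ y`, `x` ascends, `y` descends `⇒ x ≤ y * s i`. -/
theorem lift_asc_desc' {x y : W} {i : B} (hxy : BruhatLE cs x y)
    (hx : ℓ x < ℓ (x * s i)) (hy : ℓ (y * s i) < ℓ y) :
    BruhatLE cs x (y * s i) := by
  obtain ⟨κ, hκred, hκ⟩ := cs.exists_reduced_word' (y * s i)
  have hredyi : cs.IsReduced (κ ++ [i]) := by
    show ℓ (π (κ ++ [i])) = _
    have hr : ℓ (π κ) = κ.length := hκred
    have hy2 : ℓ (y * s i * s i) = ℓ (y * s i) + 1 := by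
      rw [mul_assoc, cs.simple_mul_simple_self, mul_one]
      rcases length_mul_simple_dichotomy cs y i with h | h <;> omega
    rw [cs.wordProd_append, cs.wordProd_singleton, ← hκ, hy2, List.length_append,
      List.length_singleton, ← hr, hκ]
  have hππ : π (κ ++ [i]) = y := by
    rw [cs.wordProd_append, cs.wordProd_singleton, ← hκ, mul_assoc,
      cs.simple_mul_simple_self, mul_one]
  obtain ⟨α, hαsub, hαred, hαπ⟩ := exists_sublist_of_le cs hxy hredyi hππ
  rcases List.sublist_append_iff.mp hαsub with ⟨α₁, α₂, rfl, hsub₁, hsub₂⟩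
  rcases List.sublist_singleton.mp hsub₂ with rfl | rfl
  · rw [List.append_nil] at hαπ
    have := le_of_sublist cs κ.length (Nat.le_refl _) hκred hsub₁
    rwa [hαπ, ← hκ] at this
  · -- contradiction with ℓ x < ℓ (x * s i)
    exfalso
    have hxsi : x * s i = π α₁ := by
      rw [← hαπ, cs.wordProd_append, cs.wordProd_singleton, mul_assoc,
        cs.simple_mul_simple_self, mul_one]
    have hlen : ℓ (x * s i) ≤ α₁.length := by
      rw [hxsi]
      exact cs.length_wordProd_le _
    have hlenx : ℓ x = α₁.length + 1 := by
      have h3 : ℓ (π (α₁ ++ [i])) = (α₁ ++ [i]).length := hαred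
      rw [hαπ, List.length_append, List.length_singleton] at h3
      exact h3
    omega

theorem lift_desc_desc {x y : W} {i : B} (hxy : BruhatLE cs x y)
    (hx : ℓ (x * s i) < ℓ x) (hy : ℓ (y * s i) < ℓ y) :
    BruhatLE cs (x * s i) (y * s i) := by
  have h1 : BruhatLE cs (x * s i) y :=
    le_trans cs (step_ge cs (cs.isReflection_simple i) hx) hxy
  have h2 : ℓ (x * s i) < ℓ (x * s i * s i) := by
    rw [mul_assoc, cs.simple_mul_simple_self, mul_one]
    exact hx
  exact lift_asc_desc' cs h1 h2 hy

theorem exists_atom : ∀ (n : ℕ) {u w : W}, ℓ w ≤ n → BruhatLT cs u w →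
    ∃ a, BruhatLT cs u a ∧ BruhatLE cs a w ∧ ℓ a = ℓ u + 1 := by
  intro n
  induction n using Nat.strong_induction_on with
  | _ n IH =>
    intro u w hwn hlt
    have hluw : ℓ u < ℓ w := length_lt_of_lt cs hlt
    have hwne : w ≠ 1 := by
      intro h
      rw [h, cs.length_one] at hluw
      omega
    obtain ⟨i, hdesc⟩ := cs.exists_rightDescent_of_ne_one hwne
    have hdesc' : ℓ (w * s i) < ℓ w := hdesc
    have hwlen : ℓ (w * s i) + 1 = ℓ w := by
      rcases length_mul_simple_dichotomy cs w i with h | h <;> omega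
    by_cases hu : BruhatLE cs u (w * s i)
    · by_cases he : u = w * s i
      · exact ⟨w, hlt, le_refl cs w, by rw [he]; omega⟩
      · obtain ⟨a, ha1, ha2, ha3⟩ := IH (ℓ (w * s i)) (by omega) (Nat.le_refl _) ⟨hu, he⟩
        exact ⟨a, ha1, le_trans cs ha2 (step_ge cs (cs.isReflection_simple i) hdesc'), ha3⟩
    · have hud : ℓ (u * s i) < ℓ u := by
        by_contra h'
        have : ℓ u < ℓ (u * s i) := by
          have := cs.length_mul_simple_ne u i
          omega
        exact hu (lift_asc_desc' cs hlt.1 this hdesc')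
      have husi : ℓ (u * s i) < ℓ (u * s i * s i) := by
        rw [mul_assoc, cs.simple_mul_simple_self, mul_one]
        exact hud
      have hus_le : BruhatLE cs (u * s i) (w * s i) := by
        have h1 : BruhatLE cs (u * s i) w :=
          le_trans cs (step_ge cs (cs.isReflection_simple i) hud) hlt.1
        exact lift_asc_desc' cs h1 husi hdesc'
      have husne : u * s i ≠ w * s i := by
        intro h
        apply hlt.2
        have := congrArg (fun r => r * s i) h
        simpa [mul_assoc, cs.simple_mul_simple_self] using this
      obtain ⟨b, hb1, hb2, hb3⟩ := IH (ℓ (w * s i)) (by omega) (Nat.le_refl _) ⟨hus_le, husne⟩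
      have hlb : ℓ b = ℓ u := by
        have : ℓ (u * s i) + 1 = ℓ u := by
          rcases length_mul_simple_dichotomy cs u i with h | h <;> omega
        omega
      rcases length_mul_simple_dichotomy cs b i with hbd | hbd
      · -- b ascends : a := b * s i
        refine ⟨b * s i, ⟨?_, ?_⟩, ?_, by omega⟩
        · have := lift_asc_asc cs hb1.1 husi (by omega)
          rwa [mul_assoc, cs.simple_mul_simple_self, mul_one] at this
        · intro h
          rw [← h] at hbd
          omega
        · have hwasc : ℓ (w * s i) < ℓ (w * s i * s i) := by
            rw [mul_assoc, cs.simple_mul_simple_self, mul_one]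
            omega
          have := lift_asc_asc cs hb2 (by omega) hwasc
          rwa [mul_assoc, cs.simple_mul_simple_self, mul_one] at this
      · -- b descends : contradiction
        exfalso
        have := lift_asc_desc cs hb1.1 husi (by omega)
        rw [mul_assoc, cs.simple_mul_simple_self, mul_one] at this
        have heq : u = b := eq_of_le_of_length_ge cs this (by omega)
        exact hu (heq ▸ hb2)

theorem covby_of_lt_of_length {u a : W} (h : BruhatLT cs u a) (hl : ℓ a = ℓ u + 1) :
    BruhatCovBy cs u a := by
  refine ⟨h, fun z h1 h2 => ?_⟩
  have ha := length_lt_of_lt cs h1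
  have hb := length_lt_of_lt cs h2
  omega

theorem length_of_covby {u a : W} (h : BruhatCovBy cs u a) : ℓ a = ℓ u + 1 := by
  obtain ⟨b, hb1, hb2, hb3⟩ := exists_atom cs (ℓ a) (Nat.le_refl _) h.1
  by_cases he : b = a
  · rw [← he]; exact hb3
  · exact (h.2 b hb1 ⟨hb2, he⟩).elim

theorem le_inv_of_le {x y : W} (h : BruhatLE cs x y) : BruhatLE cs x⁻¹ y⁻¹ :=
  inv_le_inv cs h

theorem llift_asc_asc {x y : W} {i : B} (hxy : BruhatLE cs x y)
    (hx : ℓ x < ℓ (s i * x)) (hy : ℓ y < ℓ (s i * y)) :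
    BruhatLE cs (s i * x) (s i * y) := by
  have h1 : ℓ x⁻¹ < ℓ (x⁻¹ * s i) := by
    have : (s i * x)⁻¹ = x⁻¹ * s i := by rw [mul_inv_rev, cs.inv_simple]
    rw [cs.length_inv, ← this, cs.length_inv]
    exact hx
  have h2 : ℓ y⁻¹ < ℓ (y⁻¹ * s i) := by
    have : (s i * y)⁻¹ = y⁻¹ * s i := by rw [mul_inv_rev, cs.inv_simple]
    rw [cs.length_inv, ← this, cs.length_inv]
    exact hy
  have := lift_asc_asc cs (inv_le_inv cs hxy) h1 h2
  have h3 := inv_le_inv cs this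
  rwa [mul_inv_rev, mul_inv_rev, cs.inv_simple, inv_inv, inv_inv] at h3

theorem llift_asc_desc {x y : W} {i : B} (hxy : BruhatLE cs x y)
    (hx : ℓ x < ℓ (s i * x)) (hy : ℓ (s i * y) < ℓ y) :
    BruhatLE cs (s i * x) y := by
  have h1 : ℓ x⁻¹ < ℓ (x⁻¹ * s i) := by
    have : (s i * x)⁻¹ = x⁻¹ * s i := by rw [mul_inv_rev, cs.inv_simple]
    rw [cs.length_inv, ← this, cs.length_inv]
    exact hx
  have h2 : ℓ (y⁻¹ * s i) < ℓ y⁻¹ := by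
    have : (s i * y)⁻¹ = y⁻¹ * s i := by rw [mul_inv_rev, cs.inv_simple]
    rw [cs.length_inv, ← this, cs.length_inv]
    exact hy
  have := lift_asc_desc cs (inv_le_inv cs hxy) h1 h2
  have h3 := inv_le_inv cs this
  rwa [mul_inv_rev, cs.inv_simple, inv_inv, inv_inv] at h3

theorem llift_asc_desc' {x y : W} {i : B} (hxy : BruhatLE cs x y)
    (hx : ℓ x < ℓ (s i * x)) (hy : ℓ (s i * y) < ℓ y) :
    BruhatLE cs x (s i * y) := by
  have h1 : ℓ x⁻¹ < ℓ (x⁻¹ * s i) := by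
    have : (s i * x)⁻¹ = x⁻¹ * s i := by rw [mul_inv_rev, cs.inv_simple]
    rw [cs.length_inv, ← this, cs.length_inv]
    exact hx
  have h2 : ℓ (y⁻¹ * s i) < ℓ y⁻¹ := by
    have : (s i * y)⁻¹ = y⁻¹ * s i := by rw [mul_inv_rev, cs.inv_simple]
    rw [cs.length_inv, ← this, cs.length_inv]
    exact hy
  have := lift_asc_desc' cs (inv_le_inv cs hxy) h1 h2
  have h3 := inv_le_inv cs this
  rwa [mul_inv_rev, cs.inv_simple, inv_inv, inv_inv] at h3

theorem llift_desc_desc {x y : W} {i : B} (hxy : BruhatLE cs x y)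
    (hx : ℓ (s i * x) < ℓ x) (hy : ℓ (s i * y) < ℓ y) :
    BruhatLE cs (s i * x) (s i * y) := by
  have h1 : ℓ (x⁻¹ * s i) < ℓ x⁻¹ := by
    have : (s i * x)⁻¹ = x⁻¹ * s i := by rw [mul_inv_rev, cs.inv_simple]
    rw [cs.length_inv, ← this, cs.length_inv]
    exact hx
  have h2 : ℓ (y⁻¹ * s i) < ℓ y⁻¹ := by
    have : (s i * y)⁻¹ = y⁻¹ * s i := by rw [mul_inv_rev, cs.inv_simple]
    rw [cs.length_inv, ← this, cs.length_inv]
    exact hy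
  have := lift_desc_desc cs (inv_le_inv cs hxy) h1 h2
  have h3 := inv_le_inv cs this
  rwa [mul_inv_rev, mul_inv_rev, cs.inv_simple, inv_inv, inv_inv] at h3

theorem ldesc_le {y : W} {i : B} (hy : ℓ (s i * y) < ℓ y) : BruhatLE cs (s i * y) y := by
  have h2 : ℓ (y⁻¹ * s i) < ℓ y⁻¹ := by
    have : (s i * y)⁻¹ = y⁻¹ * s i := by rw [mul_inv_rev, cs.inv_simple]
    rw [cs.length_inv, ← this, cs.length_inv]
    exact hy
  have := step_ge cs (cs.isReflection_simple i) h2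
  have h3 := inv_le_inv cs this
  rwa [mul_inv_rev, cs.inv_simple, inv_inv] at h3

/-! ### Parabolic subgroups and minimal coset representatives -/

theorem exists_J_word {J : Set B} {w : W} (hw : w ∈ ParabolicSubgroup cs J) :
    ∃ ω : List B, (∀ i ∈ ω, i ∈ J) ∧ π ω = w := by
  induction hw using Subgroup.closure_induction with
  | mem x hx =>
    obtain ⟨j, hj, rfl⟩ := hx
    exact ⟨[j], by simp [hj], cs.wordProd_singleton j⟩
  | one => exact ⟨[], by simp, cs.wordProd_nil⟩
  | mul x y hx hy ihx ihy =>
    obtain ⟨ω₁, h1, rfl⟩ := ihx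
    obtain ⟨ω₂, h2, rfl⟩ := ihy
    refine ⟨ω₁ ++ ω₂, ?_, cs.wordProd_append _ _⟩
    intro i hi
    rcases List.mem_append.mp hi with h | h
    exacts [h1 i h, h2 i h]
  | inv x hx ihx =>
    obtain ⟨ω, h1, rfl⟩ := ihx
    exact ⟨ω.reverse, fun i hi => h1 i (List.mem_reverse.mp hi), cs.wordProd_reverse ω⟩

theorem wordProd_mem {J : Set B} {ω : List B} (h : ∀ i ∈ ω, i ∈ J) :
    π ω ∈ ParabolicSubgroup cs J := by
  induction ω with
  | nil => rw [cs.wordProd_nil]; exact one_mem _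
  | cons j ω ih =>
    rw [cs.wordProd_cons]
    refine mul_mem ?_ (ih fun i hi => h i (List.mem_cons_of_mem j hi))
    exact Subgroup.subset_closure ⟨j, h j (List.mem_cons_self), rfl⟩

theorem exists_reduced_J_word {J : Set B} {w : W} (hw : w ∈ ParabolicSubgroup cs J) :
    ∃ ω : List B, (∀ i ∈ ω, i ∈ J) ∧ cs.IsReduced ω ∧ π ω = w := by
  obtain ⟨ω, hJ, hπ⟩ := exists_J_word cs hw
  obtain ⟨ω', hsub, hred, hπ'⟩ := exists_reduced_sublist cs ω.length ω (Nat.le_refl _)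
  exact ⟨ω', fun i hi => hJ i (hsub.subset hi), hred, by rw [hπ', hπ]⟩

theorem minrep_simple {J : Set B} {u : W} (hu : IsMinRep cs J u) {j : B} (hj : j ∈ J) :
    ℓ u < ℓ (u * s j) := by
  have h1 := hu (s j) (Subgroup.subset_closure ⟨j, hj, rfl⟩)
  have h2 := cs.length_mul_simple_ne u j
  omega

theorem minrep_mul_length : ∀ (n : ℕ) {J : Set B} {u w : W}, ℓ w ≤ n →
    IsMinRep cs J u → w ∈ ParabolicSubgroup cs J → ℓ (u * w) = ℓ u + ℓ w := by
  intro n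
  induction n using Nat.strong_induction_on with
  | _ n IH =>
    intro J u w hwn hu hw
    obtain ⟨κ, hκJ, hκred, hκπ⟩ := exists_reduced_J_word cs hw
    rcases List.eq_nil_or_concat κ with rfl | ⟨κ', j, rfl⟩
    · rw [cs.wordProd_nil] at hκπ
      rw [← hκπ, mul_one, cs.length_one]
      omega
    · simp only [List.concat_eq_append] at hκJ hκred hκπ
      have hκ'red : cs.IsReduced κ' := by
        have := hκred.take κ'.length
        rwa [List.take_left] at this
      have hκ'J : ∀ i ∈ κ', i ∈ J := fun i hi => hκJ i (List.mem_append_left _ hi)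
      have hjJ : j ∈ J := hκJ j (List.mem_append_right _ (List.mem_singleton.mpr rfl))
      have hw' : π κ' ∈ ParabolicSubgroup cs J := wordProd_mem cs hκ'J
      have hlw' : ℓ (π κ') = κ'.length := hκ'red
      have hlw : ℓ w = κ'.length + 1 := by
        have h0 : ℓ (π (κ' ++ [j])) = (κ' ++ [j]).length := hκred
        rw [hκπ, List.length_append, List.length_singleton] at h0
        exact h0
      have hIH : ℓ (u * π κ') = ℓ u + ℓ (π κ') := by
        refine IH (ℓ (π κ')) (by omega) (Nat.le_refl _) hu hw'
      obtain ⟨α, hαred, hαπ⟩ := cs.exists_reduced_word' u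
      have hαβred : cs.IsReduced (α ++ κ') := by
        show ℓ (π (α ++ κ')) = _
        have hα : ℓ (π α) = α.length := hαred
        rw [cs.wordProd_append, ← hαπ, hIH, List.length_append, hαπ, hα, hlw']
      have hαβπ : π (α ++ κ') = u * π κ' := by
        rw [cs.wordProd_append, ← hαπ]
      have hweq : w = π κ' * s j := by
        rw [← hκπ, cs.wordProd_append, cs.wordProd_singleton]
      rcases length_mul_simple_dichotomy cs (u * π κ') j with hup | hdown
      · have h7 : ℓ (π κ' * s j) = κ'.length + 1 := by rw [← hweq]; exact hlw
        rw [hweq, ← mul_assoc, hup, hIH]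
        omega
      · exfalso
        have hexc : ℓ ((u * π κ') * s j) < ℓ (u * π κ') := by omega
        obtain ⟨j₀, hj₀, heq⟩ := strong_exchange' cs (cs.isReflection_simple j) hexc
          hαβred hαβπ
        rcases Nat.lt_or_ge j₀ α.length with hcase | hcase
        · rw [List.eraseIdx_append_of_lt_length hcase] at heq
          rw [cs.wordProd_append] at heq
          -- u * π κ' * s j = π (α.eraseIdx j₀) * π κ'
          have hx : π (α.eraseIdx j₀) = u * (π κ' * s j * (π κ')⁻¹) := by
            have := congrArg (fun r => r * (π κ')⁻¹) heq
            simp only [mul_inv_cancel_right] at this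
            rw [← this]
            group
          have hmem : π κ' * s j * (π κ')⁻¹ ∈ ParabolicSubgroup cs J := by
            exact mul_mem (mul_mem hw' (Subgroup.subset_closure ⟨j, hjJ, rfl⟩)) (inv_mem hw')
          have h1 : ℓ u ≤ ℓ (π (α.eraseIdx j₀)) := by
            rw [hx]
            exact hu _ hmem
          have h2 : ℓ (π (α.eraseIdx j₀)) ≤ α.length - 1 := by
            calc ℓ (π (α.eraseIdx j₀)) ≤ (α.eraseIdx j₀).length := cs.length_wordProd_le _
              _ ≤ α.length - 1 := by
                  have := α.length_eraseIdx_add_one hcase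
                  omega
          have h3 : ℓ u = α.length := by rw [hαπ]; exact hαred
          have h4 : 0 < α.length := by
            by_contra h
            simp at h
            omega
          omega
        · have hj₀' : j₀ - α.length < κ'.length := by
            simp only [List.length_append] at hj₀
            omega
          rw [List.eraseIdx_append_of_length_le hcase, cs.wordProd_append] at heq
          have h5 : π κ' * s j = π (κ'.eraseIdx (j₀ - α.length)) := by
            rw [mul_assoc] at heq
            rw [← hαπ] at heq
            exact mul_left_cancel heq
          have h6 : ℓ (π κ' * s j) ≤ κ'.length - 1 := by
            rw [h5]
            calc ℓ (π (κ'.eraseIdx _)) ≤ (κ'.eraseIdx _).length := cs.length_wordProd_le _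
              _ ≤ κ'.length - 1 := by
                  have := κ'.length_eraseIdx_add_one hj₀'
                  omega
          rw [← hweq] at h6
          omega

theorem minrep_le_mul {J : Set B} {u w : W} (hu : IsMinRep cs J u)
    (hw : w ∈ ParabolicSubgroup cs J) : BruhatLE cs u (u * w) := by
  obtain ⟨κ, hκJ, hκred, hκπ⟩ := exists_reduced_J_word cs hw
  obtain ⟨α, hαred, hαπ⟩ := cs.exists_reduced_word' u
  have hαβred : cs.IsReduced (α ++ κ) := by
    show ℓ (π (α ++ κ)) = _
    have hα : ℓ (π α) = α.length := hαred
    have hκ : ℓ (π κ) = κ.length := hκred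
    rw [cs.wordProd_append, ← hαπ, hκπ, minrep_mul_length cs (ℓ w) (Nat.le_refl _) hu hw,
      List.length_append, hαπ, hα, ← hκπ, hκ]
  have h1 := le_of_sublist cs (α ++ κ).length (Nat.le_refl _) hαβred
    (List.sublist_append_left α κ)
  rwa [cs.wordProd_append, ← hαπ, hκπ] at h1

theorem exists_minrep (J : Set B) (y : W) :
    ∃ z : W, IsMinRep cs J z ∧ z⁻¹ * y ∈ ParabolicSubgroup cs J ∧
      ∀ x : W, x⁻¹ * y ∈ ParabolicSubgroup cs J → ℓ z ≤ ℓ x := by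
  classical
  have hne : ∃ n, ∃ z : W, z⁻¹ * y ∈ ParabolicSubgroup cs J ∧ ℓ z = n :=
    ⟨ℓ y, y, by rw [inv_mul_cancel]; exact one_mem _, rfl⟩
  obtain ⟨z, hz1, hz2⟩ := Nat.find_spec hne
  have hmin : ∀ x : W, x⁻¹ * y ∈ ParabolicSubgroup cs J → ℓ z ≤ ℓ x := by
    intro x hx
    have := Nat.find_min' hne ⟨x, hx, rfl⟩
    omega
  refine ⟨z, ?_, hz1, hmin⟩
  intro x hx
  refine hmin (z * x) ?_
  have : (z * x)⁻¹ * y = x⁻¹ * (z⁻¹ * y) := by group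
  rw [this]
  exact mul_mem (inv_mem hx) hz1

theorem minrep_coset_descent {J : Set B} {u y : W} (hu : IsMinRep cs J u)
    (hy : u⁻¹ * y ∈ ParabolicSubgroup cs J) (hne : y ≠ u) :
    ∃ j ∈ J, ℓ (y * s j) + 1 = ℓ y ∧ u⁻¹ * (y * s j) ∈ ParabolicSubgroup cs J := by
  obtain ⟨κ, hκJ, hκred, hκπ⟩ := exists_reduced_J_word cs hy
  rcases List.eq_nil_or_concat κ with rfl | ⟨κ', j, rfl⟩
  · exfalso
    apply hne
    rw [cs.wordProd_nil] at hκπ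
    have h := congrArg (fun r => u * r) hκπ.symm
    simpa using h
  · simp only [List.concat_eq_append] at hκJ hκred hκπ
    have hκ'red : cs.IsReduced κ' := by
      have := hκred.take κ'.length
      rwa [List.take_left] at this
    have hκ'J : ∀ i ∈ κ', i ∈ J := fun i hi => hκJ i (List.mem_append_left _ hi)
    have hjJ : j ∈ J := hκJ j (List.mem_append_right _ (List.mem_singleton.mpr rfl))
    have hw' : π κ' ∈ ParabolicSubgroup cs J := wordProd_mem cs hκ'J
    have hyu : y = u * (u⁻¹ * y) := by group
    have hysj : y * s j = u * π κ' := by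
      rw [hyu, ← hκπ, cs.wordProd_append, cs.wordProd_singleton, mul_assoc, mul_assoc,
        cs.simple_mul_simple_self, mul_one]
    refine ⟨j, hjJ, ?_, ?_⟩
    · have e1 : ℓ (y * s j) = ℓ u + ℓ (π κ') := by
        rw [hysj]
        exact minrep_mul_length cs _ (Nat.le_refl _) hu hw'
      have e2 : ℓ y = ℓ u + ℓ (u⁻¹ * y) := by
        conv_lhs => rw [hyu]
        exact minrep_mul_length cs _ (Nat.le_refl _) hu hy
      have e3 : ℓ (u⁻¹ * y) = κ'.length + 1 := by
        have h0 : ℓ (π (κ' ++ [j])) = (κ' ++ [j]).length := hκred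
        rw [hκπ, List.length_append, List.length_singleton] at h0
        exact h0
      have e4 : ℓ (π κ') = κ'.length := hκ'red
      omega
    · have : u⁻¹ * (y * s j) = π κ' := by rw [hysj]; group
      rw [this]
      exact hw'

theorem minrep_le_of_le : ∀ (n : ℕ) {J : Set B} {a u y : W}, ℓ y ≤ n →
    IsMinRep cs J a → IsMinRep cs J u → u⁻¹ * y ∈ ParabolicSubgroup cs J →
    BruhatLE cs a y → BruhatLE cs a u := by
  intro n
  induction n using Nat.strong_induction_on with
  | _ n IH =>
    intro J a u y hyn ha hu hy hay
    by_cases hne : y = u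
    · rwa [hne] at hay
    · obtain ⟨j, hjJ, hlen, hcoset⟩ := minrep_coset_descent cs hu hy hne
      have haj : ℓ a < ℓ (a * s j) := minrep_simple cs ha hjJ
      have h1 : BruhatLE cs a (y * s j) := lift_asc_desc' cs hay haj (by omega)
      exact IH (ℓ (y * s j)) (by omega) (Nat.le_refl _) ha hu hcoset h1

theorem minrep_of_ldesc {J : Set B} {z : W} {i : B} (hz : IsMinRep cs J z)
    (hd : ℓ (s i * z) < ℓ z) : IsMinRep cs J (s i * z) := by
  intro x hx
  have h1 := hz x hx
  have h2 : ℓ (s i * z) + 1 = ℓ z := by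
    rcases cs.length_simple_mul z i with h | h <;> omega
  have h3 : ℓ (z * x) ≤ ℓ (s i * (z * x)) + 1 := by
    rcases cs.length_simple_mul (z * x) i with h | h <;> omega
  rw [mul_assoc]
  omega

theorem length_one_mem {J : Set B} {w : W} (hw : w ∈ ParabolicSubgroup cs J)
    (hl : ℓ w = 1) : ∃ j ∈ J, w = s j := by
  obtain ⟨κ, hκJ, hκred, hκπ⟩ := exists_reduced_J_word cs hw
  have h1 : κ.length = 1 := by
    have h0 : ℓ (π κ) = κ.length := hκred
    rw [hκπ, hl] at h0
    omega
  obtain ⟨j, rfl⟩ := List.length_eq_one_iff.mp h1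
  exact ⟨j, hκJ j (List.mem_singleton.mpr rfl), by rw [← hκπ, cs.wordProd_singleton]⟩

theorem quotient_atom : ∀ (n : ℕ) {J : Set B} {u z : W}, ℓ z ≤ n →
    IsMinRep cs J u → IsMinRep cs J z → BruhatLT cs u z →
    ∃ a, IsMinRep cs J a ∧ BruhatLT cs u a ∧ ℓ a = ℓ u + 1 ∧ BruhatLE cs a z := by
  intro n
  induction n using Nat.strong_induction_on with
  | _ n IH =>
    intro J u z hzn hu hz hlt
    have hluz : ℓ u < ℓ z := length_lt_of_lt cs hlt
    have hzne : z ≠ 1 := by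
      intro h
      rw [h, cs.length_one] at hluz
      omega
    obtain ⟨i, hdi⟩ := cs.exists_leftDescent_of_ne_one hzne
    have hdi' : ℓ (s i * z) < ℓ z := hdi
    have hztmin : IsMinRep cs J (s i * z) := minrep_of_ldesc cs hz hdi'
    have hlenzt : ℓ (s i * z) + 1 = ℓ z := by
      rcases cs.length_simple_mul z i with h | h <;> omega
    have hzt_asc : ℓ (s i * z) < ℓ (s i * (s i * z)) := by
      rw [cs.simple_mul_simple_cancel_left]
      omega
    -- helper for the situation `u ≤ s i * z`
    have main : BruhatLE cs u (s i * z) →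
        ∃ a, IsMinRep cs J a ∧ BruhatLT cs u a ∧ ℓ a = ℓ u + 1 ∧ BruhatLE cs a z := by
      intro hu_le
      by_cases he : u = s i * z
      · refine ⟨z, hz, hlt, ?_, le_refl cs z⟩
        rw [he]
        omega
      · obtain ⟨a, ha1, ha2, ha3, ha4⟩ := IH (ℓ (s i * z)) (by omega) (Nat.le_refl _)
          hu hztmin ⟨hu_le, he⟩
        exact ⟨a, ha1, ha2, ha3, le_trans cs ha4 (ldesc_le cs hdi')⟩
    rcases Nat.lt_or_ge (ℓ u) (ℓ (s i * u)) with hasc | hdesc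
    · exact main (llift_asc_desc' cs hlt.1 hasc hdi')
    · have hdesc' : ℓ (s i * u) < ℓ u := by
        have := cs.length_simple_mul_ne u i
        omega
      have hutmin : IsMinRep cs J (s i * u) := minrep_of_ldesc cs hu hdesc'
      have hlenut : ℓ (s i * u) + 1 = ℓ u := by
        rcases cs.length_simple_mul u i with h | h <;> omega
      have hut_asc : ℓ (s i * u) < ℓ (s i * (s i * u)) := by
        rw [cs.simple_mul_simple_cancel_left]
        omega
      have h1 : BruhatLE cs (s i * u) (s i * z) := llift_desc_desc cs hlt.1 hdesc' hdi'
      have hne2 : s i * u ≠ s i * z := by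
        intro h
        have := congrArg (fun r => ℓ r) h
        omega
      obtain ⟨b, hb1, hb2, hb3, hb4⟩ := IH (ℓ (s i * z)) (by omega) (Nat.le_refl _)
        hutmin hztmin ⟨h1, hne2⟩
      have hlb : ℓ b = ℓ u := by omega
      rcases Nat.lt_or_ge (ℓ b) (ℓ (s i * b)) with hbasc | hbdesc
      · -- a := s i * b
        have hua : BruhatLE cs u (s i * b) := by
          have := llift_asc_asc cs hb2.1 hut_asc hbasc
          rwa [cs.simple_mul_simple_cancel_left] at this
        have hlab : ℓ (s i * b) = ℓ u + 1 := by
          rcases cs.length_simple_mul b i with h | h <;> omega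
        have haz : BruhatLE cs (s i * b) z := by
          have := llift_asc_asc cs hb4 hbasc hzt_asc
          rwa [cs.simple_mul_simple_cancel_left] at this
        refine ⟨s i * b, ?_, ⟨hua, fun h => by rw [← h] at hlab; omega⟩, hlab, haz⟩
        -- minimality of s i * b
        by_contra hnot
        unfold IsMinRep at hnot
        push_neg at hnot
        obtain ⟨x, hxP, hxl⟩ := hnot
        obtain ⟨z', hz'min, hz'coset, hz'len⟩ := exists_minrep cs J (s i * b)
        have hz'lt : ℓ z' < ℓ (s i * b) := by
          have step : ℓ z' ≤ ℓ (s i * b * x) := by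
            refine hz'len (s i * b * x) ?_
            have : (s i * b * x)⁻¹ * (s i * b) = x⁻¹ * ((s i * b)⁻¹ * (s i * b)) := by group
            rw [this, inv_mul_cancel, mul_one]
            exact inv_mem hxP
          omega
        have huz' : BruhatLE cs u z' :=
          minrep_le_of_le cs (ℓ (s i * b)) (Nat.le_refl _) hu hz'min hz'coset hua
        have huez' : u = z' :=
          eq_of_le_of_length_ge cs huz' (by omega)
        have hcos : u⁻¹ * (s i * b) ∈ ParabolicSubgroup cs J := by
          rw [huez']
          exact hz'coset
        have hlen1 : ℓ (u⁻¹ * (s i * b)) = 1 := by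
          have := minrep_mul_length cs (ℓ (u⁻¹ * (s i * b))) (Nat.le_refl _) hu hcos
          rw [mul_inv_cancel_left] at this
          omega
        obtain ⟨j, hjJ, hj⟩ := length_one_mem cs hcos hlen1
        have hab : s i * b = u * s j := by
          have : s i * b = u * (u⁻¹ * (s i * b)) := by group
          rw [this, hj]
        have hbusj : b * s j = s i * u := by
          have : b = s i * (u * s j) := by
            rw [← hab, cs.simple_mul_simple_cancel_left]
          rw [this, mul_assoc, mul_assoc, cs.simple_mul_simple_self, mul_one]
        have := hb1 (s j) (Subgroup.subset_closure ⟨j, hjJ, rfl⟩)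
        rw [hbusj] at this
        omega
      · -- b descends : then u = b ≤ s i * z
        have hub : BruhatLE cs u b := by
          have hbd : ℓ (s i * b) < ℓ b := by
            have := cs.length_simple_mul_ne b i
            omega
          have := llift_asc_desc cs hb2.1 hut_asc hbd
          rwa [cs.simple_mul_simple_cancel_left] at this
        have hueb : u = b := eq_of_le_of_length_ge cs hub (by omega)
        exact main (hueb ▸ hb4)

end BR

end StrongExchange

open BR

/-- `u W_J ∩ [e,v] = {y ∈ [u,v] : ¬(a ≤ y) for all a ∈ Aᴶ_{u,v}}`. -/
theorem coset_inter_lower_eq {B W : Type*} [Group W] {M : CoxeterMatrix B}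
    (cs : CoxeterSystem M W) (J : Set B) (u v : W)
    (hu : IsMinRep cs J u) (hv : IsMinRep cs J v) (huv : BruhatLE cs u v) :
    {y : W | u⁻¹ * y ∈ ParabolicSubgroup cs J ∧ BruhatLE cs 1 y ∧ BruhatLE cs y v} =
    {y : W | y ∈ BruhatInterval cs u v ∧
      ∀ a ∈ AtomSet cs J u v, ¬ BruhatLE cs a y} := by
  ext y
  simp only [Set.mem_setOf_eq]
  constructor
  · rintro ⟨hyJ, -, hyv⟩
    have hy_ge : BruhatLE cs u y := by
      have h := minrep_le_mul cs hu hyJ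
      rwa [mul_inv_cancel_left] at h
    refine ⟨⟨hy_ge, hyv⟩, ?_⟩
    rintro a ⟨haM, hacov, hav⟩ hay
    have h1 : BruhatLE cs a u :=
      minrep_le_of_le cs (cs.length y) (Nat.le_refl _) haM hu hyJ hay
    have h2 := length_le_of_le cs h1
    have h3 := length_lt_of_lt cs hacov.1
    omega
  · rintro ⟨⟨huy, hyv⟩, hatoms⟩
    obtain ⟨z, hzmin, hzcoset, hzlen⟩ := exists_minrep cs J y
    have hzy : BruhatLE cs z y := by
      have h := minrep_le_mul cs hzmin hzcoset
      rwa [mul_inv_cancel_left] at h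
    have huz : BruhatLE cs u z :=
      minrep_le_of_le cs (cs.length y) (Nat.le_refl _) hu hzmin hzcoset huy
    by_cases he : u = z
    · refine ⟨by rw [he]; exact hzcoset, one_le cs y, hyv⟩
    · exfalso
      obtain ⟨a, ha1, ha2, ha3, ha4⟩ := quotient_atom cs (cs.length z) (Nat.le_refl _)
        hu hzmin ⟨huz, he⟩
      have hay : BruhatLE cs a y := le_trans cs ha4 hzy
      refine hatoms a ⟨ha1, covby_of_lt_of_length cs ha2 ha3, le_trans cs hay hyv⟩ hay

end KL
end

section
/- Let (W,S) be a Coxeter system, J ⊆ S, and u, v ∈ W^J with u < v. For every y ∈ [u,v] with y^J > u, there exists a ∈ W^J with u ⋖ a ≤ y^J; in particular there is an atom a ∈ A^J_{u,v} with a ≤ y. -/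
open Polynomial

namespace KL

variable {B W : Type*} [Group W] {M : CoxeterMatrix B}

/-! ### Auxiliary development: strong exchange, Bruhat order, parabolic quotients -/

section Aux

open CoxeterSystem List Relation Function
open scoped Classical

variable (cs : CoxeterSystem M W)

private lemma conj_eq_iff' (a t c : W) : a * t * a⁻¹ = c ↔ t = a⁻¹ * c * a := by
  constructor
  · intro h; rw [← h]; group
  · intro h; rw [h]; group

/-- The function underlying the reflection-counting permutation of `W × ℤˣ`. -/
private noncomputable def bpermFun (i : B) : W × ℤˣ → W × ℤˣ :=
  fun p => (cs.simple i * p.1 * cs.simple i, if p.1 = cs.simple i then -p.2 else p.2)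

private lemma simple_conj_eq_simple_iff (i : B) (t : W) :
    cs.simple i * t * cs.simple i = cs.simple i ↔ t = cs.simple i := by
  have h := conj_eq_iff' (cs.simple i) t (cs.simple i)
  rw [cs.inv_simple] at h
  rw [h]
  constructor
  · intro h'; rw [h', cs.simple_mul_simple_self, one_mul]
  · intro h'; rw [h', cs.simple_mul_simple_self, one_mul]

private lemma bpermFun_involutive (i : B) : Function.Involutive (bpermFun cs i) := by
  rintro ⟨t, e⟩
  simp only [bpermFun]
  have h1 : cs.simple i * (cs.simple i * t * cs.simple i) * cs.simple i = t := by
    have hs : cs.simple i * cs.simple i = 1 := cs.simple_mul_simple_self i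
    have h2 : cs.simple i * (cs.simple i * t * cs.simple i) * cs.simple i
        = (cs.simple i * cs.simple i) * t * (cs.simple i * cs.simple i) := by group
    rw [h2, hs, one_mul, mul_one]
  have h2 : (cs.simple i * t * cs.simple i = cs.simple i) ↔ (t = cs.simple i) :=
    simple_conj_eq_simple_iff cs i t
  rw [Prod.ext_iff]
  refine ⟨by simpa using h1, ?_⟩
  show (if cs.simple i * t * cs.simple i = cs.simple i
      then -(if t = cs.simple i then -e else e) else (if t = cs.simple i then -e else e)) = e
  by_cases h : t = cs.simple i
  · rw [if_pos (h2.mpr h), if_pos h, neg_neg]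
  · rw [if_neg (fun hh => h (h2.mp hh)), if_neg h]

/-- The permutation of `W × ℤˣ` associated to a simple reflection. -/
noncomputable def bperm (i : B) : Equiv.Perm (W × ℤˣ) :=
  (bpermFun_involutive cs i).toPerm

private lemma bperm_apply (i : B) (p : W × ℤˣ) :
    bperm cs i p = (cs.simple i * p.1 * cs.simple i,
      if p.1 = cs.simple i then -p.2 else p.2) := rfl

private lemma bperm_liftable : M.IsLiftable (bperm cs) := by
  intro i j
  have hgm : (cs.simple i * cs.simple j) ^ M i j = 1 := cs.simple_mul_simple_pow i j
  set si := cs.simple i with hsi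
  set sj := cs.simple j with hsj
  set g : W := si * sj with hg
  set m := M i j with hm
  have hinvj : sj⁻¹ = sj := cs.inv_simple j
  have hconj1 : sj * g * sj = g⁻¹ := by
    rw [hg, mul_inv_rev, hinvj, cs.inv_simple]
    calc sj * (si * sj) * sj = sj * si * (sj * sj) := by group
      _ = sj * si := by rw [cs.simple_mul_simple_self j, mul_one]
  have hconj : ∀ n : ℕ, sj * g ^ n * sj = (g ^ n)⁻¹ := by
    intro n
    have h1 : sj * g ^ n * sj = (sj * g * sj⁻¹) ^ n := by
      rw [conj_pow, hinvj]
    rw [h1, hinvj, hconj1, inv_pow]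
  have hsjg : ∀ n : ℕ, sj * g ^ n = (g ^ n)⁻¹ * sj := by
    intro n
    calc sj * g ^ n = (sj * g ^ n * sj) * sj := by
          rw [mul_assoc, cs.simple_mul_simple_self j, mul_one]
      _ = (g ^ n)⁻¹ * sj := by rw [hconj n]
  have hc1 : ∀ (k : ℕ) (t : W), (g ^ k * t * (g ^ k)⁻¹ = sj) ↔ (t = (g ^ (2 * k))⁻¹ * sj) := by
    intro k t
    rw [conj_eq_iff']
    have e1 : (g ^ k)⁻¹ * sj * g ^ k = (g ^ (2 * k))⁻¹ * sj := by
      calc (g ^ k)⁻¹ * sj * g ^ k = (g ^ k)⁻¹ * (sj * g ^ k) := by rw [mul_assoc]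
        _ = (g ^ k)⁻¹ * ((g ^ k)⁻¹ * sj) := by rw [hsjg k]
        _ = (g ^ (2 * k))⁻¹ * sj := by rw [two_mul, pow_add, mul_inv_rev]; group
    rw [e1]
  have hc2 : ∀ (k : ℕ) (t : W),
      (sj * (g ^ k * t * (g ^ k)⁻¹) * sj = si) ↔ (t = (g ^ (2 * k + 1))⁻¹ * sj) := by
    intro k t
    have step1 : (sj * (g ^ k * t * (g ^ k)⁻¹) * sj = si)
        ↔ (g ^ k * t * (g ^ k)⁻¹ = sj * si * sj) := by
      nth_rewrite 1 [show sj * (g ^ k * t * (g ^ k)⁻¹) * sj = sj * (g ^ k * t * (g ^ k)⁻¹) * sj⁻¹ by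
        rw [hinvj]]
      rw [conj_eq_iff', hinvj]
    rw [step1, conj_eq_iff']
    have e2 : (g ^ k)⁻¹ * (sj * si * sj) * g ^ k = (g ^ (2 * k + 1))⁻¹ * sj := by
      have hg1 : sj * si * sj = g⁻¹ * sj := by
        rw [hg, mul_inv_rev, hinvj, cs.inv_simple]
      have hp : g ^ (2 * k + 1) = g ^ k * g * g ^ k := by
        have h' : 2 * k + 1 = (k + 1) + k := by omega
        rw [h', pow_add, pow_succ]
      calc (g ^ k)⁻¹ * (sj * si * sj) * g ^ k = ((g ^ k)⁻¹ * g⁻¹) * (sj * g ^ k) := by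
            rw [hg1]; group
        _ = ((g ^ k)⁻¹ * g⁻¹) * ((g ^ k)⁻¹ * sj) := by rw [hsjg k]
        _ = (g ^ (2 * k + 1))⁻¹ * sj := by rw [hp]; group
    rw [e2]
  have key : ∀ (k : ℕ) (t : W) (e : ℤˣ), ((bperm cs i * bperm cs j) ^ k) (t, e) =
      (g ^ k * t * (g ^ k)⁻¹,
        e * ∏ r ∈ Finset.range (2 * k), (if t = (g ^ r)⁻¹ * sj then (-1 : ℤˣ) else 1)) := by
    intro k
    induction k with
    | zero => intro t e; simp
    | succ k ih =>
      intro t e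
      rw [pow_succ', Equiv.Perm.mul_apply, ih t e, Equiv.Perm.mul_apply,
        bperm_apply cs, bperm_apply cs]
      simp only [← hsi, ← hsj]
      refine Prod.ext ?_ ?_
      · show si * (sj * (g ^ k * t * (g ^ k)⁻¹) * sj) * si = g ^ (k + 1) * t * (g ^ (k + 1))⁻¹
        have hji : sj * si = g⁻¹ := by rw [hg, mul_inv_rev, hinvj, cs.inv_simple]
        calc si * (sj * (g ^ k * t * (g ^ k)⁻¹) * sj) * si
            = (si * sj) * (g ^ k * t * (g ^ k)⁻¹) * (sj * si) := by group
          _ = g * (g ^ k * t * (g ^ k)⁻¹) * g⁻¹ := by rw [hji, ← hg]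
          _ = g ^ (k + 1) * t * (g ^ (k + 1))⁻¹ := by group
      · show (if sj * (g ^ k * t * (g ^ k)⁻¹) * sj = si then
            -(if g ^ k * t * (g ^ k)⁻¹ = sj
              then -(e * ∏ r ∈ Finset.range (2 * k), (if t = (g ^ r)⁻¹ * sj then (-1 : ℤˣ) else 1))
              else (e * ∏ r ∈ Finset.range (2 * k), (if t = (g ^ r)⁻¹ * sj then (-1 : ℤˣ) else 1)))
          else
            (if g ^ k * t * (g ^ k)⁻¹ = sj
              then -(e * ∏ r ∈ Finset.range (2 * k), (if t = (g ^ r)⁻¹ * sj then (-1 : ℤˣ) else 1))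
              else (e * ∏ r ∈ Finset.range (2 * k), (if t = (g ^ r)⁻¹ * sj then (-1 : ℤˣ) else 1))))
          = e * ∏ r ∈ Finset.range (2 * (k + 1)), (if t = (g ^ r)⁻¹ * sj then (-1 : ℤˣ) else 1)
        have h2k : 2 * (k + 1) = 2 * k + 1 + 1 := by omega
        rw [h2k, Finset.prod_range_succ, Finset.prod_range_succ]
        rw [if_congr (hc1 k t) rfl rfl, if_congr (hc2 k t) rfl rfl]
        by_cases hp1 : t = (g ^ (2 * k))⁻¹ * sj <;> by_cases hp2 : t = (g ^ (2 * k + 1))⁻¹ * sj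
        · simp only [if_pos hp1, if_pos hp2, neg_neg, mul_neg_one]
        · simp only [if_pos hp1, if_neg hp2, mul_neg_one, mul_one, mul_neg]
        · simp only [if_neg hp1, if_pos hp2, mul_neg_one, mul_one, mul_neg]
        · simp only [if_neg hp1, if_neg hp2, mul_one]
  show ((bperm cs i * bperm cs j) ^ m) = 1
  apply Equiv.ext
  rintro ⟨t, e⟩
  rw [key m t e]
  have hper : ∀ r : ℕ, ((g ^ (m + r))⁻¹ : W) = (g ^ r)⁻¹ := by
    intro r; rw [pow_add, hgm, one_mul]
  have hprod : (∏ r ∈ Finset.range (2 * m), (if t = (g ^ r)⁻¹ * sj then (-1 : ℤˣ) else 1)) = 1 := by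
    have h2m : 2 * m = m + m := by omega
    rw [h2m, Finset.prod_range_add]
    have he : ∀ r, (if t = (g ^ (m + r))⁻¹ * sj then (-1 : ℤˣ) else 1)
        = (if t = (g ^ r)⁻¹ * sj then (-1 : ℤˣ) else 1) := by
      intro r; rw [hper r]
    rw [Finset.prod_congr rfl (fun r _ => he r)]
    exact Int.units_mul_self _
  rw [hprod, hgm]
  simp

/-- The homomorphism from `W` to permutations of `W × ℤˣ`. -/
noncomputable def bhom : W →* Equiv.Perm (W × ℤˣ) := cs.lift ⟨bperm cs, bperm_liftable cs⟩

private lemma bhom_simple (i : B) : bhom cs (cs.simple i) = bperm cs i :=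
  cs.lift_apply_simple (bperm_liftable cs) i

/-- The sign of `t` relative to the right inversion sequence of `ω`. -/
private noncomputable def rsgn (ω : List B) (t : W) : ℤˣ :=
  ((cs.rightInvSeq ω).map (fun u => if u = t then (-1 : ℤˣ) else 1)).prod

private lemma bhom_wordProd (ω : List B) (t : W) (e : ℤˣ) :
    bhom cs (cs.wordProd ω) (t, e)
      = (cs.wordProd ω * t * (cs.wordProd ω)⁻¹, e * rsgn cs ω t) := by
  induction ω generalizing e with
  | nil => simp [rsgn]
  | cons i ω ih =>
    rw [wordProd_cons, map_mul, Equiv.Perm.mul_apply, ih, bhom_simple, bperm_apply]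
    simp only
    have hcond : (cs.wordProd ω * t * (cs.wordProd ω)⁻¹ = cs.simple i)
        ↔ (t = (cs.wordProd ω)⁻¹ * cs.simple i * cs.wordProd ω) := conj_eq_iff' _ _ _
    have hris : cs.rightInvSeq (i :: ω)
        = ((cs.wordProd ω)⁻¹ * cs.simple i * cs.wordProd ω) :: cs.rightInvSeq ω := rfl
    refine Prod.ext ?_ ?_
    · show cs.simple i * (cs.wordProd ω * t * (cs.wordProd ω)⁻¹) * cs.simple i
        = cs.wordProd (i :: ω) * t * (cs.wordProd (i :: ω))⁻¹
      rw [wordProd_cons]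
      have : (cs.simple i * cs.wordProd ω)⁻¹ = (cs.wordProd ω)⁻¹ * cs.simple i := by
        rw [mul_inv_rev, cs.inv_simple]
      rw [this]; group
    · show (if cs.wordProd ω * t * (cs.wordProd ω)⁻¹ = cs.simple i
          then -(e * rsgn cs ω t) else (e * rsgn cs ω t)) = e * rsgn cs (i :: ω) t
      rw [if_congr hcond rfl rfl]
      unfold rsgn
      rw [hris, List.map_cons, List.prod_cons]
      by_cases h : t = (cs.wordProd ω)⁻¹ * cs.simple i * cs.wordProd ω
      · rw [if_pos h, if_pos h.symm, neg_one_mul, mul_neg]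
      · rw [if_neg h, if_neg (fun hh => h hh.symm), one_mul]

private lemma bperm_apply_fst_self (i : B) (c : ℤˣ) :
    bperm cs i (cs.simple i, c) = (cs.simple i, -c) := by
  rw [bperm_apply]
  refine Prod.ext ?_ ?_
  · show cs.simple i * cs.simple i * cs.simple i = cs.simple i
    rw [cs.simple_mul_simple_self, one_mul]
  · show (if cs.simple i = cs.simple i then -c else c) = -c
    rw [if_pos rfl]

/-- The sign `η(w, t)`. -/
private noncomputable def eta (w t : W) : ℤˣ := (bhom cs w (t, 1)).2

private lemma eta_eq_rsgn (ω : List B) (t : W) : eta cs (cs.wordProd ω) t = rsgn cs ω t := by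
  rw [eta, bhom_wordProd cs ω t 1, one_mul]

private lemma bhom_apply (w t : W) (e : ℤˣ) :
    bhom cs w (t, e) = (w * t * w⁻¹, e * eta cs w t) := by
  obtain ⟨ω, rfl⟩ := cs.wordProd_surjective w
  rw [bhom_wordProd cs ω t e, eta_eq_rsgn cs ω t]

private lemma mem_rightInvSeq_of_rsgn_ne_one (ω : List B) (t : W) (h : rsgn cs ω t ≠ 1) :
    t ∈ cs.rightInvSeq ω := by
  by_contra hmem
  apply h
  unfold rsgn
  apply List.prod_eq_one
  intro x hx
  obtain ⟨u, hu, rfl⟩ := List.mem_map.mp hx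
  rw [if_neg]
  rintro rfl
  exact hmem hu

private lemma neg_one_ne_one' : (-1 : ℤˣ) ≠ 1 := by decide

private lemma descent_of_eta_eq_neg_one {w t : W} (h : eta cs w t = -1) :
    cs.length (w * t) < cs.length w := by
  obtain ⟨ω, hred, rfl⟩ := cs.exists_reduced_word' w
  rw [eta_eq_rsgn cs ω t] at h
  have hmem : t ∈ cs.rightInvSeq ω := by
    apply mem_rightInvSeq_of_rsgn_ne_one cs
    rw [h]; exact neg_one_ne_one'
  exact (cs.isRightInversion_of_mem_rightInvSeq hred hmem).2

private lemma eta_self {t : W} (ht : cs.IsReflection t) : eta cs t t = -1 := by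
  obtain ⟨u, i, rfl⟩ := ht
  set t := u * cs.simple i * u⁻¹ with hts
  have hr1 : bhom cs u⁻¹ (t, 1) = (cs.simple i, eta cs u⁻¹ t) := by
    rw [bhom_apply cs u⁻¹ t 1, one_mul]
    congr 1
    rw [hts]; group
  have hrel : eta cs u (cs.simple i) * eta cs u⁻¹ t = 1 := by
    have h1 : bhom cs (u⁻¹ * u) (cs.simple i, 1) = (cs.simple i, 1) := by
      rw [inv_mul_cancel, map_one]; rfl
    have h2 : bhom cs (u⁻¹ * u) (cs.simple i, 1)
        = bhom cs u⁻¹ (bhom cs u (cs.simple i, 1)) := by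
      rw [map_mul, Equiv.Perm.mul_apply]
    have h3 : bhom cs u (cs.simple i, 1) = (t, eta cs u (cs.simple i)) := by
      rw [bhom_apply cs u (cs.simple i) 1, one_mul, hts]
    have h4 : bhom cs u⁻¹ (t, eta cs u (cs.simple i))
        = (cs.simple i, eta cs u (cs.simple i) * eta cs u⁻¹ t) := by
      rw [bhom_apply cs u⁻¹ t (eta cs u (cs.simple i))]
      congr 1
      rw [hts]; group
    have := h1.symm.trans (h2.trans (by rw [h3, h4]))
    exact (congrArg Prod.snd this).symm
  have hfact : bhom cs t = bhom cs u * bhom cs (cs.simple i) * bhom cs u⁻¹ := by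
    rw [← map_mul, ← map_mul, hts]
  show (bhom cs t (t, 1)).2 = -1
  rw [hfact, Equiv.Perm.mul_apply, Equiv.Perm.mul_apply, hr1, bhom_simple,
    bperm_apply_fst_self cs, bhom_apply cs u (cs.simple i) (-(eta cs u⁻¹ t))]
  show -eta cs u⁻¹ t * eta cs u (cs.simple i) = -1
  rw [neg_mul, mul_comm (eta cs u⁻¹ t), hrel]

private lemma eta_mul_self {w t : W} (ht : cs.IsReflection t) :
    eta cs (w * t) t = -(eta cs w t) := by
  have h1 : bhom cs (w * t) (t, 1) = bhom cs w (bhom cs t (t, 1)) := by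
    rw [map_mul, Equiv.Perm.mul_apply]
  have h2 : bhom cs t (t, 1) = (t, -1) := by
    rw [bhom_apply cs t t 1, one_mul, eta_self cs ht]
    congr 1
    rw [ht.inv]
    rw [ht.mul_self, one_mul]
  show (bhom cs (w * t) (t, 1)).2 = -(eta cs w t)
  rw [h1, h2, bhom_apply cs w t (-1)]
  show (-1 : ℤˣ) * eta cs w t = -(eta cs w t)
  rw [neg_one_mul]

private lemma eta_eq_neg_one_of_descent {w t : W} (ht : cs.IsReflection t)
    (h : cs.length (w * t) < cs.length w) : eta cs w t = -1 := by
  rcases Int.units_eq_one_or (eta cs w t) with h1 | h1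
  · exfalso
    have h2 : eta cs (w * t) t = -1 := by rw [eta_mul_self cs ht, h1]
    have h3 := descent_of_eta_eq_neg_one cs h2
    rw [mul_assoc, ht.mul_self, mul_one] at h3
    omega
  · exact h1

/-- **Strong exchange property**. -/
private lemma strong_exchange (ω : List B) {t : W} (ht : cs.IsReflection t)
    (hlt : cs.length (cs.wordProd ω * t) < cs.length (cs.wordProd ω)) :
    ∃ k < ω.length, cs.wordProd ω * t = cs.wordProd (ω.eraseIdx k) := by
  have heta : eta cs (cs.wordProd ω) t = -1 := eta_eq_neg_one_of_descent cs ht hlt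
  rw [eta_eq_rsgn cs ω t] at heta
  have hmem : t ∈ cs.rightInvSeq ω := by
    apply mem_rightInvSeq_of_rsgn_ne_one cs
    rw [heta]; exact neg_one_ne_one'
  obtain ⟨k, hk, hget⟩ := List.getElem_of_mem hmem
  have hk' : k < ω.length := by
    have := cs.length_rightInvSeq ω
    omega
  refine ⟨k, hk', ?_⟩
  have := cs.wordProd_mul_getD_rightInvSeq ω k
  rw [List.getD_eq_getElem _ _ hk, hget] at this
  exact this

/-! #### Basic properties of the Bruhat order -/

private lemma bruhatLE_length_le {x y : W} (h : BruhatLE cs x y) :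
    cs.length x ≤ cs.length y := by
  induction h with
  | refl => exact le_refl _
  | tail _ h2 ih =>
    obtain ⟨t, _, rfl, hlen⟩ := h2
    exact ih.trans hlen.le

private lemma bruhatLE_eq_of_length_le {x y : W} (h : BruhatLE cs x y)
    (hl : cs.length y ≤ cs.length x) : x = y := by
  rcases Relation.ReflTransGen.cases_tail h with h1 | ⟨c, hxc, t, _, rfl, hlen⟩
  · exact h1.symm
  · exfalso
    have := bruhatLE_length_le cs hxc
    omega

private lemma bruhatLT_iff {x y : W} :
    BruhatLT cs x y ↔ BruhatLE cs x y ∧ cs.length x < cs.length y := by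
  constructor
  · rintro ⟨h, hne⟩
    refine ⟨h, ?_⟩
    rcases lt_or_ge (cs.length x) (cs.length y) with h1 | h1
    · exact h1
    · exact absurd (bruhatLE_eq_of_length_le cs h h1) hne
  · rintro ⟨h, hl⟩
    exact ⟨h, fun he => by rw [he] at hl; omega⟩

private lemma bruhatLE_step {x t : W} (ht : cs.IsReflection t)
    (h : cs.length x < cs.length (x * t)) : BruhatLE cs x (x * t) :=
  Relation.ReflTransGen.single ⟨t, ht, rfl, h⟩

private lemma bruhatLE_step_down {x t : W} (ht : cs.IsReflection t)
    (h : cs.length (x * t) < cs.length x) : BruhatLE cs (x * t) x := by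
  have heq : (x * t) * t = x := by rw [mul_assoc, ht.mul_self, mul_one]
  have h2 : BruhatLE cs (x * t) ((x * t) * t) :=
    bruhatLE_step cs ht (by rw [heq]; exact h)
  rwa [heq] at h2

private lemma bruhatCovBy_of {x y : W} (h : BruhatLE cs x y)
    (hl : cs.length y = cs.length x + 1) : BruhatCovBy cs x y := by
  constructor
  · exact (bruhatLT_iff cs).mpr ⟨h, by omega⟩
  · intro z hz1 hz2
    have l1 := ((bruhatLT_iff cs).mp hz1).2
    have l2 := ((bruhatLT_iff cs).mp hz2).2
    omega

private lemma bruhatLE_inv {x y : W} (h : BruhatLE cs x y) : BruhatLE cs x⁻¹ y⁻¹ := by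
  induction h with
  | refl => exact .refl
  | @tail b c hab h2 ih =>
    obtain ⟨t, ht, rfl, hlen⟩ := h2
    have heq : b⁻¹ * (b * t * b⁻¹) = (b * t)⁻¹ := by
      rw [mul_inv_rev, ht.inv]
      group
    refine ih.tail ⟨b * t * b⁻¹, ht.conj b, ?_, ?_⟩
    · rw [heq]
    · rw [cs.length_inv, cs.length_inv]
      exact hlen

private lemma isReflection_simple_conj {t : W} (ht : cs.IsReflection t) (i : B) :
    cs.IsReflection (cs.simple i * t * cs.simple i) := by
  have := ht.conj (cs.simple i)
  rwa [cs.inv_simple] at this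

private lemma mul_simple_conj_eq (z t : W) (i : B) :
    (z * cs.simple i) * (cs.simple i * t * cs.simple i) = z * t * cs.simple i := by
  have h : (z * cs.simple i) * (cs.simple i * t * cs.simple i)
      = z * (cs.simple i * cs.simple i) * t * cs.simple i := by group
  rw [h, cs.simple_mul_simple_self, mul_one]

/-- One-letter deletion from a reduced word goes down in Bruhat order. -/
private lemma wordProd_eraseIdx_le (ρ : List B) (hρ : cs.IsReduced ρ) (k : ℕ) :
    BruhatLE cs (cs.wordProd (ρ.eraseIdx k)) (cs.wordProd ρ) := by
  by_cases hk : k < ρ.length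
  · set t := (cs.rightInvSeq ρ).getD k 1 with hts
    have hmem : t ∈ cs.rightInvSeq ρ := by
      rw [hts, List.getD_eq_getElem _ _ (by rw [cs.length_rightInvSeq]; exact hk)]
      exact List.getElem_mem _
    have ht : cs.IsReflection t := cs.isReflection_of_mem_rightInvSeq ρ hmem
    have heq : cs.wordProd ρ * t = cs.wordProd (ρ.eraseIdx k) :=
      cs.wordProd_mul_getD_rightInvSeq ρ k
    have heq2 : cs.wordProd (ρ.eraseIdx k) * t = cs.wordProd ρ := by
      rw [← heq, mul_assoc, ht.mul_self, mul_one]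
    have hlen : cs.length (cs.wordProd (ρ.eraseIdx k)) < cs.length (cs.wordProd ρ) := by
      have h1 := cs.length_wordProd_le (ρ.eraseIdx k)
      rw [List.length_eraseIdx, if_pos hk] at h1
      have h2 : cs.length (cs.wordProd ρ) = ρ.length := hρ
      omega
    have h3 : BruhatLE cs (cs.wordProd (ρ.eraseIdx k)) (cs.wordProd (ρ.eraseIdx k) * t) :=
      bruhatLE_step cs ht (by rw [heq2]; exact hlen)
    rwa [heq2] at h3
  · rw [List.eraseIdx_of_length_le (le_of_not_gt hk)]
    exact .refl

/-- The exchange-based case split used in the lifting lemmas. -/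
private lemma exch_split {z t : W} {i : B} (ht : cs.IsReflection t)
    (hlen : cs.length z < cs.length (z * t))
    (hyi : cs.length (z * t * cs.simple i) < cs.length (z * t)) :
    z = z * t * cs.simple i ∨ BruhatLE cs (z * cs.simple i) (z * t * cs.simple i) := by
  obtain ⟨ρ'', hred, heq⟩ := cs.exists_reduced_word' (z * t * cs.simple i)
  have hprod : cs.wordProd (ρ'' ++ [i]) = z * t := by
    rw [cs.wordProd_append, cs.wordProd_singleton, ← heq, cs.simple_mul_simple_cancel_right]
  have hred2 : cs.IsReduced (ρ'' ++ [i]) := by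
    show cs.length (cs.wordProd (ρ'' ++ [i])) = (ρ'' ++ [i]).length
    rw [hprod, List.length_append, List.length_singleton]
    have hl1 : cs.length (z * t * cs.simple i) = ρ''.length := by rw [heq]; exact hred
    have hd := cs.length_mul_simple (z * t) i
    omega
  have hzt : cs.length (cs.wordProd (ρ'' ++ [i]) * t) < cs.length (cs.wordProd (ρ'' ++ [i])) := by
    rw [hprod, mul_assoc, ht.mul_self, mul_one]
    exact hlen
  obtain ⟨k, hk, hkeq⟩ := strong_exchange cs (ρ'' ++ [i]) ht hzt
  rw [hprod] at hkeq
  have hz_eq : z = cs.wordProd ((ρ'' ++ [i]).eraseIdx k) := by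
    rw [← hkeq, mul_assoc, ht.mul_self, mul_one]
  rcases lt_or_ge k ρ''.length with hklt | hkge
  · right
    rw [List.eraseIdx_append_of_lt_length hklt [i], cs.wordProd_append,
      cs.wordProd_singleton] at hz_eq
    have h5 : z * cs.simple i = cs.wordProd (ρ''.eraseIdx k) := by
      rw [hz_eq, cs.simple_mul_simple_cancel_right]
    rw [h5, heq]
    exact wordProd_eraseIdx_le cs ρ'' hred k
  · left
    rw [List.eraseIdx_append_of_length_le hkge [i]] at hz_eq
    have hk0 : k - ρ''.length = 0 := by
      rw [List.length_append, List.length_singleton] at hk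
      omega
    rw [hk0] at hz_eq
    simp only [List.eraseIdx_cons_zero, List.append_nil] at hz_eq
    exact hz_eq.trans heq.symm

/-- The lifting ("property Z") lemmas, proved simultaneously. -/
private lemma Zlemma : ∀ n : ℕ, ∀ y x : W, ∀ i : B, cs.length y = n → BruhatLE cs x y →
    ((cs.length y < cs.length (y * cs.simple i) →
       BruhatLE cs (x * cs.simple i) (y * cs.simple i))
    ∧ (cs.length (y * cs.simple i) < cs.length y →
       BruhatLE cs (x * cs.simple i) y)
    ∧ (cs.length (y * cs.simple i) < cs.length y → cs.length x < cs.length (x * cs.simple i) →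
       BruhatLE cs x (y * cs.simple i))
    ∧ (cs.length (y * cs.simple i) < cs.length y → cs.length (x * cs.simple i) < cs.length x →
       BruhatLE cs (x * cs.simple i) (y * cs.simple i))) := by
  intro n
  induction n using Nat.strong_induction_on with
  | _ n ih =>
  intro y x i hyn hxy
  rcases Relation.ReflTransGen.cases_tail hxy with heq | ⟨z, hxz, hzy⟩
  · subst heq
    refine ⟨fun ha => ?_, fun hd => ?_, fun hd hxa => ?_, fun hd hxd => ?_⟩
    · exact .refl
    · exact bruhatLE_step_down cs (cs.isReflection_simple i) hd
    · omega
    · exact .refl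
  · obtain ⟨t, ht, rfl, hzy_len⟩ := hzy
    have hzn : cs.length z < n := by omega
    obtain ⟨ihZ1, ihZ2, ihZ3, ihZ4⟩ := ih (cs.length z) (by omega) z x i rfl hxz
    have hdz := cs.length_mul_simple z i
    have hdy := cs.length_mul_simple (z * t) i
    have hti : cs.IsReflection (cs.simple i * t * cs.simple i) := isReflection_simple_conj cs ht i
    have hzi_step : cs.length z < cs.length (z * cs.simple i) →
        BruhatLE cs (z * cs.simple i) (z * t * cs.simple i) →
        True := fun _ _ => trivial
    refine ⟨fun ha => ?_, fun hd => ?_, fun hd hxa => ?_, fun hd hxd => ?_⟩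
    · -- Z1
      by_cases hz : cs.length z < cs.length (z * cs.simple i)
      · have h1 := ihZ1 hz
        have hstep : BruhatLE cs (z * cs.simple i) (z * t * cs.simple i) := by
          have e1 := mul_simple_conj_eq cs z t i
          rw [← e1]
          apply bruhatLE_step cs hti
          rw [e1]
          omega
        exact h1.trans hstep
      · have hzd : cs.length (z * cs.simple i) < cs.length z := by omega
        have h1 := ihZ2 hzd
        have h2 : BruhatLE cs z (z * t) := bruhatLE_step cs ht hzy_len
        have h3 : BruhatLE cs (z * t) (z * t * cs.simple i) :=
          bruhatLE_step cs (cs.isReflection_simple i) ha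
        exact h1.trans (h2.trans h3)
    · -- Z2
      by_cases hz : cs.length (z * cs.simple i) < cs.length z
      · have h1 := ihZ2 hz
        exact h1.trans (bruhatLE_step cs ht hzy_len)
      · rcases exch_split cs ht hzy_len hd with hcase | hcase
        ·
          have h1 := ihZ1 (by omega)
          -- z*si : from hcase, z * si = z*t*si*si = z*t
          have h2 : z * cs.simple i = z * t := by
            nth_rewrite 1 [hcase]
            rw [cs.simple_mul_simple_cancel_right]
          rw [h2] at h1
          exact h1
        · have h1 := ihZ1 (by omega)
          have h2 : BruhatLE cs (z * t * cs.simple i) (z * t) :=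
            bruhatLE_step_down cs (cs.isReflection_simple i) hd
          exact (h1.trans hcase).trans h2
    · -- Z3
      by_cases hz : cs.length (z * cs.simple i) < cs.length z
      · have h1 := ihZ3 hz hxa
        have hstep : BruhatLE cs (z * cs.simple i) (z * t * cs.simple i) := by
          have e1 := mul_simple_conj_eq cs z t i
          rw [← e1]
          apply bruhatLE_step cs hti
          rw [e1]
          omega
        exact h1.trans hstep
      · rcases exch_split cs ht hzy_len hd with hcase | hcase
        · rw [← hcase]
          exact hxz
        · have h2 : BruhatLE cs z (z * cs.simple i) :=
            bruhatLE_step cs (cs.isReflection_simple i) (by omega)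
          exact (hxz.trans h2).trans hcase
    · -- Z4
      by_cases hz : cs.length (z * cs.simple i) < cs.length z
      · have h1 := ihZ4 hz hxd
        have hstep : BruhatLE cs (z * cs.simple i) (z * t * cs.simple i) := by
          have e1 := mul_simple_conj_eq cs z t i
          rw [← e1]
          apply bruhatLE_step cs hti
          rw [e1]
          omega
        exact h1.trans hstep
      · have hx1 : BruhatLE cs (x * cs.simple i) x :=
          bruhatLE_step_down cs (cs.isReflection_simple i) hxd
        rcases exch_split cs ht hzy_len hd with hcase | hcase
        · rw [← hcase]
          exact hx1.trans hxz
        · have h2 : BruhatLE cs z (z * cs.simple i) :=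
            bruhatLE_step cs (cs.isReflection_simple i) (by omega)
          exact ((hx1.trans hxz).trans h2).trans hcase

private lemma Z1 {x y : W} (i : B) (h : BruhatLE cs x y)
    (ha : cs.length y < cs.length (y * cs.simple i)) :
    BruhatLE cs (x * cs.simple i) (y * cs.simple i) :=
  (Zlemma cs (cs.length y) y x i rfl h).1 ha

private lemma Z2 {x y : W} (i : B) (h : BruhatLE cs x y)
    (hd : cs.length (y * cs.simple i) < cs.length y) :
    BruhatLE cs (x * cs.simple i) y :=
  (Zlemma cs (cs.length y) y x i rfl h).2.1 hd

private lemma Z3 {x y : W} (i : B) (h : BruhatLE cs x y)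
    (hd : cs.length (y * cs.simple i) < cs.length y)
    (hxa : cs.length x < cs.length (x * cs.simple i)) :
    BruhatLE cs x (y * cs.simple i) :=
  (Zlemma cs (cs.length y) y x i rfl h).2.2.1 hd hxa

private lemma Z4 {x y : W} (i : B) (h : BruhatLE cs x y)
    (hd : cs.length (y * cs.simple i) < cs.length y)
    (hxd : cs.length (x * cs.simple i) < cs.length x) :
    BruhatLE cs (x * cs.simple i) (y * cs.simple i) :=
  (Zlemma cs (cs.length y) y x i rfl h).2.2.2 hd hxd

/-! #### Subword properties -/

private lemma exists_reduced_sublist : ∀ (n : ℕ) (ω : List B), ω.length = n →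
    ∃ σ, σ.Sublist ω ∧ cs.IsReduced σ ∧ cs.wordProd σ = cs.wordProd ω := by
  intro n
  induction n using Nat.strong_induction_on with
  | _ n ih =>
  intro ω hn
  by_cases hred : cs.IsReduced ω
  · exact ⟨ω, List.Sublist.refl ω, hred, rfl⟩
  · rcases ω.eq_nil_or_concat with rfl | ⟨ω', i, rfl⟩
    · exact absurd (by simp [CoxeterSystem.IsReduced]) hred
    · rw [List.concat_eq_append] at *
      have hlenω : ω'.length + 1 = n := by
        rw [← hn, List.length_append, List.length_singleton]
      have hww : cs.wordProd (ω' ++ [i]) = cs.wordProd ω' * cs.simple i := by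
        rw [cs.wordProd_append, cs.wordProd_singleton]
      by_cases hred' : cs.IsReduced ω'
      · have hlt : cs.length (cs.wordProd (ω' ++ [i])) < (ω' ++ [i]).length :=
          lt_of_le_of_ne (cs.length_wordProd_le _) hred
        have h1 : cs.length (cs.wordProd ω') = ω'.length := hred'
        have hd := cs.length_mul_simple (cs.wordProd ω') i
        have hlen' : cs.length (cs.wordProd ω' * cs.simple i) < cs.length (cs.wordProd ω') := by
          rw [hww] at hlt
          rw [List.length_append, List.length_singleton] at hlt
          omega
        obtain ⟨k, hk, hkeq⟩ := strong_exchange cs ω' (cs.isReflection_simple i) hlen'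
        have heq2 : cs.wordProd (ω' ++ [i]) = cs.wordProd (ω'.eraseIdx k) := by
          rw [hww, hkeq]
        have hlener : (ω'.eraseIdx k).length < n := by
          rw [List.length_eraseIdx, if_pos hk]
          omega
        obtain ⟨σ, hs1, hs2, hs3⟩ := ih (ω'.eraseIdx k).length hlener (ω'.eraseIdx k) rfl
        refine ⟨σ, ?_, hs2, by rw [hs3, ← heq2]⟩
        exact hs1.trans ((List.eraseIdx_sublist ω' k).trans (List.sublist_append_left ω' [i]))
      · obtain ⟨σ', h1, h2, h3⟩ := ih ω'.length (by omega) ω' rfl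
        have hlt' : σ'.length < ω'.length := by
          have e1 : cs.length (cs.wordProd σ') = σ'.length := h2
          have e2 : cs.length (cs.wordProd ω') < ω'.length :=
            lt_of_le_of_ne (cs.length_wordProd_le _) hred'
          rw [h3] at e1
          omega
        obtain ⟨σ, g1, g2, g3⟩ := ih (σ'.length + 1) (by omega) (σ' ++ [i])
          (by rw [List.length_append, List.length_singleton])
        refine ⟨σ, ?_, g2, ?_⟩
        · exact g1.trans (h1.append (List.Sublist.refl [i]))
        · rw [g3, cs.wordProd_append, cs.wordProd_singleton, h3, ← hww]

private lemma exists_reduced_sublist' (ω : List B) :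
    ∃ σ, σ.Sublist ω ∧ cs.IsReduced σ ∧ cs.wordProd σ = cs.wordProd ω :=
  exists_reduced_sublist cs ω.length ω rfl

/-- Subword property, "only if" direction. -/
private lemma subword_of_le : ∀ {x w : W}, BruhatLE cs x w →
    ∀ ρ : List B, cs.IsReduced ρ → w = cs.wordProd ρ →
    ∃ σ, σ.Sublist ρ ∧ x = cs.wordProd σ := by
  intro x w h
  induction h with
  | refl => exact fun ρ _ hw => ⟨ρ, List.Sublist.refl ρ, hw⟩
  | @tail b c hab h2 ih =>
    intro ρ hred hc
    obtain ⟨t, ht, rfl, hlen⟩ := h2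
    have hb : cs.wordProd ρ * t = b := by
      rw [← hc, mul_assoc, ht.mul_self, mul_one]
    have hlt : cs.length (cs.wordProd ρ * t) < cs.length (cs.wordProd ρ) := by
      rw [hb, ← hc]
      exact hlen
    obtain ⟨k, hk, hkeq⟩ := strong_exchange cs ρ ht hlt
    obtain ⟨σ₁, hs1, hs2, hs3⟩ := exists_reduced_sublist' cs (ρ.eraseIdx k)
    obtain ⟨σ, hsub, hx⟩ := ih σ₁ hs2 (by rw [hs3, ← hkeq, hb])
    exact ⟨σ, hsub.trans (hs1.trans (List.eraseIdx_sublist ρ k)), hx⟩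

/-- Subword property, "if" direction (for sublists of a reduced word). -/
private lemma le_of_sublist : ∀ (ρ : List B), cs.IsReduced ρ → ∀ σ, σ.Sublist ρ →
    BruhatLE cs (cs.wordProd σ) (cs.wordProd ρ) := by
  intro ρ
  induction ρ using List.reverseRecOn with
  | nil =>
    intro _ σ hσ
    rw [List.sublist_nil.mp hσ]
    exact Relation.ReflTransGen.refl
  | append_singleton ρ' i ihr =>
    intro hred σ hσ
    have hred' : cs.IsReduced ρ' := by
      have := CoxeterSystem.IsReduced.take hred ρ'.length
      rwa [List.take_left] at this
    have hasc : cs.length (cs.wordProd ρ') < cs.length (cs.wordProd ρ' * cs.simple i) := by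
      have h1 : cs.length (cs.wordProd (ρ' ++ [i])) = (ρ' ++ [i]).length := hred
      rw [cs.wordProd_append, cs.wordProd_singleton, List.length_append,
        List.length_singleton] at h1
      have h2 : cs.length (cs.wordProd ρ') = ρ'.length := hred'
      omega
    rcases List.sublist_append_iff.mp hσ with ⟨σ₁, σ₂, rfl, h1, h2⟩
    rcases List.sublist_singleton.mp h2 with rfl | rfl
    · rw [List.append_nil, cs.wordProd_append, cs.wordProd_singleton]
      exact (ihr hred' σ₁ h1).trans (bruhatLE_step cs (cs.isReflection_simple i) hasc)
    · rw [cs.wordProd_append, cs.wordProd_singleton, cs.wordProd_append, cs.wordProd_singleton]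
      exact Z1 cs i (ihr hred' σ₁ h1) hasc

/-! #### Left-handed lifting lemmas -/

private lemma inv_simple_mul (w : W) (i : B) :
    w⁻¹ * cs.simple i = (cs.simple i * w)⁻¹ := by
  rw [mul_inv_rev, cs.inv_simple]

private lemma Z1left {x y : W} (i : B) (h : BruhatLE cs x y)
    (ha : cs.length y < cs.length (cs.simple i * y)) :
    BruhatLE cs (cs.simple i * x) (cs.simple i * y) := by
  have ha' : cs.length y⁻¹ < cs.length (y⁻¹ * cs.simple i) := by
    rw [inv_simple_mul cs y i, cs.length_inv, cs.length_inv]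
    exact ha
  have h' := Z1 cs i (bruhatLE_inv cs h) ha'
  rw [inv_simple_mul cs x i, inv_simple_mul cs y i] at h'
  have h'' := bruhatLE_inv cs h'
  simpa using h''

private lemma Z2left {x y : W} (i : B) (h : BruhatLE cs x y)
    (hd : cs.length (cs.simple i * y) < cs.length y) :
    BruhatLE cs (cs.simple i * x) y := by
  have hd' : cs.length (y⁻¹ * cs.simple i) < cs.length y⁻¹ := by
    rw [inv_simple_mul cs y i, cs.length_inv, cs.length_inv]
    exact hd
  have h' := Z2 cs i (bruhatLE_inv cs h) hd'
  rw [inv_simple_mul cs x i] at h'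
  have h'' := bruhatLE_inv cs h'
  simpa using h''

private lemma Z3left {x y : W} (i : B) (h : BruhatLE cs x y)
    (hd : cs.length (cs.simple i * y) < cs.length y)
    (hxa : cs.length x < cs.length (cs.simple i * x)) :
    BruhatLE cs x (cs.simple i * y) := by
  have hd' : cs.length (y⁻¹ * cs.simple i) < cs.length y⁻¹ := by
    rw [inv_simple_mul cs y i, cs.length_inv, cs.length_inv]
    exact hd
  have hxa' : cs.length x⁻¹ < cs.length (x⁻¹ * cs.simple i) := by
    rw [inv_simple_mul cs x i, cs.length_inv, cs.length_inv]
    exact hxa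
  have h' := Z3 cs i (bruhatLE_inv cs h) hd' hxa'
  rw [inv_simple_mul cs y i] at h'
  have h'' := bruhatLE_inv cs h'
  simpa using h''

private lemma Z4left {x y : W} (i : B) (h : BruhatLE cs x y)
    (hd : cs.length (cs.simple i * y) < cs.length y)
    (hxd : cs.length (cs.simple i * x) < cs.length x) :
    BruhatLE cs (cs.simple i * x) (cs.simple i * y) := by
  have hd' : cs.length (y⁻¹ * cs.simple i) < cs.length y⁻¹ := by
    rw [inv_simple_mul cs y i, cs.length_inv, cs.length_inv]
    exact hd
  have hxd' : cs.length (x⁻¹ * cs.simple i) < cs.length x⁻¹ := by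
    rw [inv_simple_mul cs x i, cs.length_inv, cs.length_inv]
    exact hxd
  have h' := Z4 cs i (bruhatLE_inv cs h) hd' hxd'
  rw [inv_simple_mul cs x i, inv_simple_mul cs y i] at h'
  have h'' := bruhatLE_inv cs h'
  simpa using h''

/-! #### Parabolic subgroups and minimal coset representatives -/

private lemma mem_parabolic_of_word (J : Set B) (ω : List B) (hω : ∀ i ∈ ω, i ∈ J) :
    cs.wordProd ω ∈ ParabolicSubgroup cs J := by
  induction ω with
  | nil =>
    rw [cs.wordProd_nil]
    exact Subgroup.one_mem _
  | cons i ω ih =>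
    rw [cs.wordProd_cons]
    exact Subgroup.mul_mem _ (Subgroup.subset_closure ⟨i, hω i (by simp), rfl⟩)
      (ih fun j hj => hω j (by simp [hj]))

private lemma exists_word_of_mem_parabolic {J : Set B} {x : W}
    (hx : x ∈ ParabolicSubgroup cs J) :
    ∃ ω : List B, (∀ i ∈ ω, i ∈ J) ∧ cs.wordProd ω = x := by
  induction hx using Subgroup.closure_induction with
  | mem g hg =>
    obtain ⟨i, hi, rfl⟩ := hg
    exact ⟨[i], by simpa using hi, cs.wordProd_singleton i⟩
  | one => exact ⟨[], by simp, cs.wordProd_nil⟩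
  | mul a b _ _ iha ihb =>
    obtain ⟨ωa, ha1, ha2⟩ := iha
    obtain ⟨ωb, hb1, hb2⟩ := ihb
    refine ⟨ωa ++ ωb, ?_, by rw [cs.wordProd_append, ha2, hb2]⟩
    intro i hi
    rcases List.mem_append.mp hi with h | h
    · exact ha1 i h
    · exact hb1 i h
  | inv a _ iha =>
    obtain ⟨ω, h1, h2⟩ := iha
    exact ⟨ω.reverse, fun i hi => h1 i (List.mem_reverse.mp hi),
      by rw [cs.wordProd_reverse, h2]⟩

private lemma exists_reduced_word_parabolic {J : Set B} {x : W}
    (hx : x ∈ ParabolicSubgroup cs J) :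
    ∃ ω : List B, (∀ i ∈ ω, i ∈ J) ∧ cs.IsReduced ω ∧ cs.wordProd ω = x := by
  obtain ⟨ω, h1, h2⟩ := exists_word_of_mem_parabolic cs hx
  obtain ⟨σ, hs1, hs2, hs3⟩ := exists_reduced_sublist' cs ω
  exact ⟨σ, fun i hi => h1 i (hs1.subset hi), hs2, hs3.trans h2⟩

private lemma length_minRep_mul (J : Set B) : ∀ n : ℕ, ∀ z x : W, cs.length x = n →
    IsMinRep cs J z → x ∈ ParabolicSubgroup cs J →
    cs.length (z * x) = cs.length z + cs.length x := by
  intro n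
  induction n using Nat.strong_induction_on with
  | _ n ih =>
  intro z x hxn hz hx
  obtain ⟨τ, hτJ, hτred, hτx⟩ := exists_reduced_word_parabolic cs hx
  rcases τ.eq_nil_or_concat with rfl | ⟨τ₂, j, rfl⟩
  · rw [← hτx, cs.wordProd_nil, mul_one, cs.length_one, add_zero]
  · rw [List.concat_eq_append] at hτJ hτred hτx
    have hjJ : j ∈ J := hτJ j (by simp)
    have hτ₂red : cs.IsReduced τ₂ := by
      have := CoxeterSystem.IsReduced.take hτred τ₂.length
      rwa [List.take_left] at this
    have hx₂mem : cs.wordProd τ₂ ∈ ParabolicSubgroup cs J :=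
      mem_parabolic_of_word cs J τ₂ (fun i hi => hτJ i (by simp [hi]))
    have hx₂len : cs.length (cs.wordProd τ₂) = τ₂.length := hτ₂red
    have hxlen : cs.length x = τ₂.length + 1 := by
      rw [← hτx]
      have h1 : cs.length (cs.wordProd (τ₂ ++ [j])) = (τ₂ ++ [j]).length := hτred
      rw [h1, List.length_append, List.length_singleton]
    have ihz := ih (cs.length (cs.wordProd τ₂)) (by omega) z (cs.wordProd τ₂) rfl hz hx₂mem
    have hxeq : x = cs.wordProd τ₂ * cs.simple j := by
      rw [← hτx, cs.wordProd_append, cs.wordProd_singleton]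
    rcases cs.length_mul_simple (z * cs.wordProd τ₂) j with hd | hd
    · have hzx : z * x = z * cs.wordProd τ₂ * cs.simple j := by rw [hxeq, mul_assoc]
      rw [hzx, hd, ihz, hxlen, hx₂len]
      omega
    · exfalso
      obtain ⟨ζ, hζred, hζz⟩ := cs.exists_reduced_word' z
      have hζlen : ζ.length = cs.length z := by
        rw [hζz]
        exact hζred.symm
      have hcat : cs.wordProd (ζ ++ τ₂) = z * cs.wordProd τ₂ := by
        rw [cs.wordProd_append, ← hζz]
      have hcatred : cs.IsReduced (ζ ++ τ₂) := by
        show cs.length (cs.wordProd (ζ ++ τ₂)) = (ζ ++ τ₂).length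
        rw [hcat, ihz, List.length_append]
        omega
      have hdesc : cs.length (cs.wordProd (ζ ++ τ₂) * cs.simple j)
          < cs.length (cs.wordProd (ζ ++ τ₂)) := by
        rw [hcat]
        omega
      obtain ⟨k, hk, hkeq⟩ := strong_exchange cs (ζ ++ τ₂) (cs.isReflection_simple j) hdesc
      rw [hcat] at hkeq
      rcases lt_or_ge k ζ.length with hklt | hkge
      · rw [List.eraseIdx_append_of_lt_length hklt, cs.wordProd_append] at hkeq
        have hc : z * (cs.wordProd τ₂ * cs.simple j * (cs.wordProd τ₂)⁻¹)
            = cs.wordProd (ζ.eraseIdx k) := by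
          have h9 : z * (cs.wordProd τ₂ * cs.simple j * (cs.wordProd τ₂)⁻¹)
              = (z * cs.wordProd τ₂ * cs.simple j) * (cs.wordProd τ₂)⁻¹ := by group
          rw [h9, hkeq]; group
        have hcmem : cs.wordProd τ₂ * cs.simple j * (cs.wordProd τ₂)⁻¹
            ∈ ParabolicSubgroup cs J :=
          mul_mem (mul_mem hx₂mem (Subgroup.subset_closure ⟨j, hjJ, rfl⟩)) (inv_mem hx₂mem)
        have hmin := hz _ hcmem
        rw [hc] at hmin
        have hwle := cs.length_wordProd_le (ζ.eraseIdx k)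
        rw [List.length_eraseIdx, if_pos hklt] at hwle
        omega
      · rw [List.eraseIdx_append_of_length_le hkge, cs.wordProd_append, ← hζz,
          mul_assoc] at hkeq
        have hxx : x = cs.wordProd (τ₂.eraseIdx (k - ζ.length)) := by
          rw [hxeq]
          exact mul_left_cancel hkeq
        have hklt2 : k - ζ.length < τ₂.length := by
          rw [List.length_append] at hk
          omega
        have hle := cs.length_wordProd_le (τ₂.eraseIdx (k - ζ.length))
        rw [← hxx, List.length_eraseIdx, if_pos hklt2] at hle
        omega

private lemma length_minRep_mul' {J : Set B} {z x : W} (hz : IsMinRep cs J z)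
    (hx : x ∈ ParabolicSubgroup cs J) :
    cs.length (z * x) = cs.length z + cs.length x :=
  length_minRep_mul cs J (cs.length x) z x rfl hz hx

private lemma minRep_unique {J : Set B} {z z' : W} (hz : IsMinRep cs J z)
    (hz' : IsMinRep cs J z') (h : z⁻¹ * z' ∈ ParabolicSubgroup cs J) : z = z' := by
  have hm2 : z'⁻¹ * z ∈ ParabolicSubgroup cs J := by
    have := inv_mem h
    rwa [mul_inv_rev, inv_inv] at this
  have e1 : cs.length (z * (z⁻¹ * z')) = cs.length z + cs.length (z⁻¹ * z') :=
    length_minRep_mul' cs hz h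
  have e2 : cs.length (z' * (z'⁻¹ * z)) = cs.length z' + cs.length (z'⁻¹ * z) :=
    length_minRep_mul' cs hz' hm2
  rw [show z * (z⁻¹ * z') = z' by group] at e1
  rw [show z' * (z'⁻¹ * z) = z by group] at e2
  have h0 : cs.length (z⁻¹ * z') = 0 := by omega
  have h1 : z⁻¹ * z' = 1 := cs.length_eq_zero_iff.mp h0
  have : z * (z⁻¹ * z') = z * 1 := by rw [h1]
  rw [show z * (z⁻¹ * z') = z' by group, mul_one] at this
  exact this.symm

private lemma exists_minRep_rep (J : Set B) (w : W) :
    ∃ p, IsMinRep cs J p ∧ p⁻¹ * w ∈ ParabolicSubgroup cs J := by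
  have hex : ∃ n, ∃ x, x ∈ ParabolicSubgroup cs J ∧ cs.length (w * x) = n :=
    ⟨cs.length (w * 1), 1, Subgroup.one_mem _, rfl⟩
  obtain ⟨x₀, hx₀mem, hx₀⟩ := Nat.find_spec hex
  refine ⟨w * x₀, ?_, ?_⟩
  · intro x hx
    have h2 : Nat.find hex ≤ cs.length (w * (x₀ * x)) :=
      Nat.find_min' hex ⟨x₀ * x, mul_mem hx₀mem hx, rfl⟩
    rw [hx₀, mul_assoc]
    exact h2
  · have heq : (w * x₀)⁻¹ * w = x₀⁻¹ := by group
    rw [heq]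
    exact inv_mem hx₀mem

private lemma minRep_le_mul (J : Set B) : ∀ n : ℕ, ∀ z x : W, cs.length x = n →
    IsMinRep cs J z → x ∈ ParabolicSubgroup cs J → BruhatLE cs z (z * x) := by
  intro n
  induction n using Nat.strong_induction_on with
  | _ n ih =>
  intro z x hxn hz hx
  obtain ⟨τ, hτJ, hτred, hτx⟩ := exists_reduced_word_parabolic cs hx
  rcases τ.eq_nil_or_concat with rfl | ⟨τ₂, j, rfl⟩
  · rw [← hτx, cs.wordProd_nil, mul_one]
    exact Relation.ReflTransGen.refl
  · rw [List.concat_eq_append] at hτJ hτred hτx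
    have hτ₂red : cs.IsReduced τ₂ := by
      have := CoxeterSystem.IsReduced.take hτred τ₂.length
      rwa [List.take_left] at this
    have hx₂mem : cs.wordProd τ₂ ∈ ParabolicSubgroup cs J :=
      mem_parabolic_of_word cs J τ₂ (fun i hi => hτJ i (by simp [hi]))
    have hx₂len : cs.length (cs.wordProd τ₂) = τ₂.length := hτ₂red
    have hxlen : cs.length x = τ₂.length + 1 := by
      rw [← hτx]
      have h1 : cs.length (cs.wordProd (τ₂ ++ [j])) = (τ₂ ++ [j]).length := hτred
      rw [h1, List.length_append, List.length_singleton]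
    have ih1 := ih (cs.length (cs.wordProd τ₂)) (by omega) z (cs.wordProd τ₂) rfl hz hx₂mem
    have hxeq : x = cs.wordProd τ₂ * cs.simple j := by
      rw [← hτx, cs.wordProd_append, cs.wordProd_singleton]
    have e1 : cs.length (z * cs.wordProd τ₂) = cs.length z + τ₂.length := by
      rw [length_minRep_mul' cs hz hx₂mem, hx₂len]
    have e2 : cs.length (z * x) = cs.length z + τ₂.length + 1 := by
      rw [length_minRep_mul' cs hz hx, hxlen]
      omega
    have hstep : BruhatLE cs (z * cs.wordProd τ₂) (z * x) := by
      rw [hxeq, ← mul_assoc]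
      apply bruhatLE_step cs (cs.isReflection_simple j)
      rw [mul_assoc, ← hxeq, e2]
      omega
    exact ih1.trans hstep

private lemma minRep_le_mul' {J : Set B} {z x : W} (hz : IsMinRep cs J z)
    (hx : x ∈ ParabolicSubgroup cs J) : BruhatLE cs z (z * x) :=
  minRep_le_mul cs J (cs.length x) z x rfl hz hx

private lemma minRep_simple_ascent {J : Set B} {w : W} (hw : IsMinRep cs J w) {j : B}
    (hj : j ∈ J) : cs.length w < cs.length (w * cs.simple j) := by
  have h1 := hw (cs.simple j) (Subgroup.subset_closure ⟨j, hj, rfl⟩)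
  have h2 := cs.length_mul_simple_ne w j
  omega

private lemma isMinRep_simple_mul {J : Set B} {w : W} (hw : IsMinRep cs J w) {i : B}
    (h : cs.length (cs.simple i * w) < cs.length w) : IsMinRep cs J (cs.simple i * w) := by
  intro x hx
  have e1 : cs.length (w * x) = cs.length w + cs.length x := length_minRep_mul' cs hw hx
  have h3 := cs.length_simple_mul (w * x) i
  have h4 := cs.length_simple_mul w i
  rw [mul_assoc]
  omega

private lemma eq_simple_of_parabolic_length_one {J : Set B} {x : W}
    (hx : x ∈ ParabolicSubgroup cs J) (hlen : cs.length x = 1) :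
    ∃ j ∈ J, x = cs.simple j := by
  obtain ⟨τ, hτJ, hτred, hτx⟩ := exists_reduced_word_parabolic cs hx
  have hτ1 : τ.length = 1 := by
    rw [← hlen, ← hτx]
    exact hτred.symm
  obtain ⟨a, rfl⟩ := List.length_eq_one_iff.mp hτ1
  exact ⟨a, hτJ a (by simp), by rw [← hτx, cs.wordProd_singleton]⟩

/-- If `u` is a minimal representative and `u ≤ y`, then `u ≤ yᴶ`. -/
private lemma minRep_le_minRep_of_le {J : Set B} {u q y : W} (hu : IsMinRep cs J u)
    (hq : IsMinRep cs J q) (hyq : q⁻¹ * y ∈ ParabolicSubgroup cs J)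
    (hle : BruhatLE cs u y) : BruhatLE cs u q := by
  have hymem : y = q * (q⁻¹ * y) := by group
  obtain ⟨ρ₁, hρ₁red, hρ₁⟩ := cs.exists_reduced_word' q
  obtain ⟨τ, hτJ, hτred, hτd⟩ := exists_reduced_word_parabolic cs hyq
  have hcat : cs.wordProd (ρ₁ ++ τ) = y := by
    rw [cs.wordProd_append, ← hρ₁, hτd, ← hymem]
  have hcatred : cs.IsReduced (ρ₁ ++ τ) := by
    show cs.length (cs.wordProd (ρ₁ ++ τ)) = (ρ₁ ++ τ).length
    rw [hcat, List.length_append]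
    have e1 : cs.length y = cs.length q + cs.length (q⁻¹ * y) := by
      nth_rewrite 1 [hymem]
      exact length_minRep_mul' cs hq hyq
    have e2 : cs.length q = ρ₁.length := by rw [hρ₁]; exact hρ₁red
    have e3 : cs.length (q⁻¹ * y) = τ.length := by rw [← hτd]; exact hτred
    omega
  obtain ⟨σ, hσsub, hσu⟩ := subword_of_le cs hle (ρ₁ ++ τ) hcatred hcat.symm
  rcases List.sublist_append_iff.mp hσsub with ⟨σ₁, σ₂, rfl, h1, h2⟩
  have hσ₂mem : cs.wordProd σ₂ ∈ ParabolicSubgroup cs J :=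
    mem_parabolic_of_word cs J σ₂ (fun i hi => hτJ i (h2.subset hi))
  have hu2 : u * (cs.wordProd σ₂)⁻¹ = cs.wordProd σ₁ := by
    rw [hσu, cs.wordProd_append]
    group
  have step1 : BruhatLE cs u (cs.wordProd σ₁) := by
    rw [← hu2]
    exact minRep_le_mul' cs hu (inv_mem hσ₂mem)
  have step2 : BruhatLE cs (cs.wordProd σ₁) q := by
    rw [hρ₁]
    exact le_of_sublist cs ρ₁ hρ₁red σ₁ h1
  exact step1.trans step2

/-- Key lemma: if `u < w` in `Wᴶ`, there is `a ∈ Wᴶ` with `u ⋖ a ≤ w`. -/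
private lemma exists_atom_aux (J : Set B) : ∀ n : ℕ, ∀ w u : W, cs.length w = n →
    IsMinRep cs J u → IsMinRep cs J w → BruhatLT cs u w →
    ∃ a, IsMinRep cs J a ∧ BruhatLE cs u a ∧ cs.length a = cs.length u + 1 ∧
      BruhatLE cs a w := by
  intro n
  induction n using Nat.strong_induction_on with
  | _ n ih =>
  intro w u hwn hu hw huw
  obtain ⟨hle, hlen⟩ := by
    have h := (bruhatLT_iff cs).mp huw
    exact h
  have hlen' : cs.length u < cs.length w := hlen
  have hwne : w ≠ 1 := by
    intro h
    rw [h, cs.length_one] at hlen'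
    omega
  obtain ⟨i, hdesc⟩ := cs.exists_leftDescent_of_ne_one hwne
  have hdesc' : cs.length (cs.simple i * w) < cs.length w := hdesc
  have hww' : w = cs.simple i * (cs.simple i * w) := by
    rw [cs.simple_mul_simple_cancel_left]
  have hw'min : IsMinRep cs J (cs.simple i * w) := isMinRep_simple_mul cs hw hdesc'
  have hascw : cs.length (cs.simple i * w) + 1 = cs.length w := by
    have hd := cs.length_simple_mul w i
    omega
  have hw'w : BruhatLE cs (cs.simple i * w) w := by
    have ht : cs.IsReflection ((cs.simple i * w)⁻¹ * cs.simple i * (cs.simple i * w)) := by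
      have := (cs.isReflection_simple i).conj (cs.simple i * w)⁻¹
      rwa [inv_inv] at this
    have heq : (cs.simple i * w) * ((cs.simple i * w)⁻¹ * cs.simple i * (cs.simple i * w))
        = w := by
      have h9 : (cs.simple i * w) * ((cs.simple i * w)⁻¹ * cs.simple i * (cs.simple i * w))
          = cs.simple i * (cs.simple i * w) := by group
      rw [h9, cs.simple_mul_simple_cancel_left]
    have := bruhatLE_step cs ht (x := cs.simple i * w) (by rw [heq]; exact hdesc')
    rwa [heq] at this
  by_cases hcase : BruhatLE cs u (cs.simple i * w)
  · by_cases hequ : u = cs.simple i * w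
    · refine ⟨w, hw, hle, ?_, Relation.ReflTransGen.refl⟩
      rw [← hequ] at hascw
      omega
    · obtain ⟨a, ha1, ha2, ha3, ha4⟩ := ih (cs.length (cs.simple i * w)) (by omega)
        (cs.simple i * w) u rfl hu hw'min ⟨hcase, hequ⟩
      exact ⟨a, ha1, ha2, ha3, ha4.trans hw'w⟩
  · have hud : cs.length (cs.simple i * u) < cs.length u := by
      by_contra hnd
      have hua : cs.length u < cs.length (cs.simple i * u) := by
        have := cs.length_simple_mul_ne u i
        omega
      exact hcase (Z3left cs i hle hdesc' hua)
    have hu'min : IsMinRep cs J (cs.simple i * u) := isMinRep_simple_mul cs hu hud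
    have hascu : cs.length (cs.simple i * u) + 1 = cs.length u := by
      have := cs.length_simple_mul u i
      omega
    have hu'le : BruhatLE cs (cs.simple i * u) (cs.simple i * w) := Z4left cs i hle hdesc' hud
    have hu'ne : cs.simple i * u ≠ cs.simple i * w := fun h => huw.2 (mul_left_cancel h)
    obtain ⟨a', ha1, ha2, ha3, ha4⟩ := ih (cs.length (cs.simple i * w)) (by omega)
      (cs.simple i * w) (cs.simple i * u) rfl hu'min hw'min ⟨hu'le, hu'ne⟩
    by_cases hadesc : cs.length (cs.simple i * a') < cs.length a'
    · exfalso
      have h5 : BruhatLE cs (cs.simple i * (cs.simple i * u)) a' := Z2left cs i ha2 hadesc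
      rw [cs.simple_mul_simple_cancel_left] at h5
      have h6 : u = a' := bruhatLE_eq_of_length_le cs h5 (by omega)
      exact hcase (h6 ▸ ha4)
    · have haasc : cs.length a' < cs.length (cs.simple i * a') := by
        have := cs.length_simple_mul_ne a' i
        omega
      have hua : BruhatLE cs u (cs.simple i * a') := by
        have := Z1left cs i ha2 haasc
        rwa [cs.simple_mul_simple_cancel_left] at this
      have halen : cs.length (cs.simple i * a') = cs.length u + 1 := by
        have := cs.length_simple_mul a' i
        omega
      have haw : BruhatLE cs (cs.simple i * a') w := by
        have hasc2 : cs.length (cs.simple i * w)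
            < cs.length (cs.simple i * (cs.simple i * w)) := by
          rw [cs.simple_mul_simple_cancel_left]
          omega
        have := Z1left cs i ha4 hasc2
        rwa [cs.simple_mul_simple_cancel_left] at this
      by_cases hmr : IsMinRep cs J (cs.simple i * a')
      · exact ⟨cs.simple i * a', hmr, hua, halen, haw⟩
      · exfalso
        obtain ⟨p, hp, hpmem⟩ := exists_minRep_rep cs J (cs.simple i * a')
        have hplen : cs.length (cs.simple i * a')
            = cs.length p + cs.length (p⁻¹ * (cs.simple i * a')) := by
          have h7 := length_minRep_mul' cs hp hpmem
          rwa [show p * (p⁻¹ * (cs.simple i * a')) = cs.simple i * a' by group] at h7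
        have hdne : p⁻¹ * (cs.simple i * a') ≠ 1 := by
          intro h
          apply hmr
          have h8 : p = cs.simple i * a' := inv_mul_eq_one.mp h
          rwa [h8] at hp
        have hdlen : 1 ≤ cs.length (p⁻¹ * (cs.simple i * a')) := by
          rcases Nat.eq_zero_or_pos (cs.length (p⁻¹ * (cs.simple i * a'))) with h0 | h0
          · exact absurd (cs.length_eq_zero_iff.mp h0) hdne
          · exact h0
        have hup : BruhatLE cs u p := minRep_le_minRep_of_le cs hu hp hpmem hua
        have hpu : p = u := by
          have h12 : cs.length p ≤ cs.length u := by
            have e1 := hplen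
            have e2 := halen
            have e3 := hdlen
            omega
          exact (bruhatLE_eq_of_length_le cs hup h12).symm
        have hdone : cs.length (u⁻¹ * (cs.simple i * a')) = 1 := by
          rw [hpu] at hplen
          omega
        have hpmem' : u⁻¹ * (cs.simple i * a') ∈ ParabolicSubgroup cs J := by
          rw [← hpu]
          exact hpmem
        obtain ⟨j, hjJ, hdj⟩ := eq_simple_of_parabolic_length_one cs hpmem' hdone
        have ha'eq : a' = (cs.simple i * u) * cs.simple j := by
          have h7 : cs.simple i * a' = u * cs.simple j := by
            rw [← hdj]
            group
          have h8 := congrArg (fun g => cs.simple i * g) h7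
          rw [cs.simple_mul_simple_cancel_left] at h8
          rw [h8]
          group
        have hmem2 : (cs.simple i * u)⁻¹ * a' ∈ ParabolicSubgroup cs J := by
          rw [ha'eq, show (cs.simple i * u)⁻¹ * ((cs.simple i * u) * cs.simple j)
            = cs.simple j by group]
          exact Subgroup.subset_closure ⟨j, hjJ, rfl⟩
        have h10 := minRep_unique cs hu'min ha1 hmem2
        rw [← h10] at ha3
        omega

end Aux

/-- for `u < v` in `Wᴶ` and `y ∈ [u,v]` with `yᴶ > u`, there is
an atom `a ∈ Wᴶ` with `u ⋖ a ≤ yᴶ`; in particular `a ∈ Aᴶ_{u,v}` and `a ≤ y`. -/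
theorem exists_atom_le {B W : Type*} [Group W] {M : CoxeterMatrix B}
    (cs : CoxeterSystem M W) (J : Set B) (u v : W)
    (hu : IsMinRep cs J u) (hv : IsMinRep cs J v) (huv : BruhatLT cs u v)
    (y : W) (hy : y ∈ BruhatInterval cs u v)
    (yJ : W) (hyJ : IsMinRep cs J yJ)
    (hyJmem : yJ⁻¹ * y ∈ ParabolicSubgroup cs J)
    (hgt : BruhatLT cs u yJ) :
    ∃ a : W, IsMinRep cs J a ∧ BruhatCovBy cs u a ∧ BruhatLE cs a yJ ∧
      a ∈ AtomSet cs J u v ∧ BruhatLE cs a y := by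
  have hyle : BruhatLE cs yJ y := by
    have h1 := minRep_le_mul' cs hyJ hyJmem
    rwa [show yJ * (yJ⁻¹ * y) = y by group] at h1
  obtain ⟨a, ha1, ha2, ha3, ha4⟩ :=
    exists_atom_aux cs J (cs.length yJ) yJ u rfl hu hyJ hgt
  have hcov : BruhatCovBy cs u a := bruhatCovBy_of cs ha2 ha3
  have hay : BruhatLE cs a y := ha4.trans hyle
  have hav : BruhatLE cs a v := hay.trans hy.2
  exact ⟨a, ha1, hcov, ha4, ⟨ha1, hcov, hav⟩, hay⟩

end KL
end
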